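/- arXiv:1307.5777 — 7 statements merged into one kernel-verified Lean document; each statement's English description precedes it below -/
import Mathlib

section
/- If G is a generalized Hadamard matrix (i.e., G · conj(G)ᵀ = q·I_q), then for all p,t ∈ V(n,q): Σ_{s ∈ V(n,q)} (1/s!) · MG(p;s) · conj(MG(t;s)) = (qⁿ/p!) · δ_{p,t}, where s! = Π_i s_i! and δ_{p,t} is 1 if p = t and 0 otherwise. -/
open Finset

/-- `V n q` is the set of weak compositions of `n` into `q` parts. -/
def V (n q : ℕ) : Finset (Fin q → ℕ) :=
  (Fintype.piFinset fun _ : Fin q => Finset.range (n + 1)).filter fun p => ∑ i, p i = n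

open scoped Classical in
/-- The m-polynomial `MG(p; s)` with respect to the matrix `G`. -/
noncomputable def MG {q : ℕ} (n : ℕ) (G : Matrix (Fin q) (Fin q) ℂ)
    (p s : Fin q → ℕ) : ℂ :=
  ∑ r ∈ (Fintype.piFinset fun _ : Fin q => Fintype.piFinset fun _ : Fin q =>
      Finset.range (n + 1)).filter
      (fun r => (∀ i, ∑ j, r i j = s i) ∧ (∀ j, ∑ i, r i j = p j)),
    ((∏ i, Nat.factorial (s i) : ℕ) : ℂ) / ((∏ i, ∏ j, Nat.factorial (r i j) : ℕ) : ℂ) *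
      ∏ i, ∏ j, G i j ^ r i j

open scoped Classical
open MvPolynomial

lemma sum_V {n q : ℕ} {p : Fin q → ℕ} (hp : p ∈ V n q) : ∑ i, p i = n := by
  simp only [V, mem_filter] at hp; exact hp.2

lemma le_V {n q : ℕ} {p : Fin q → ℕ} (hp : p ∈ V n q) (i : Fin q) : p i ≤ n := by
  rw [← sum_V hp]
  exact Finset.single_le_sum (fun j _ => Nat.zero_le _) (mem_univ i)

lemma mem_V_of {n q : ℕ} {p : Fin q → ℕ} (h : ∑ i, p i = n) : p ∈ V n q := by
  simp only [V, mem_filter, Fintype.mem_piFinset, Finset.mem_range, Nat.lt_succ_iff]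
  refine ⟨fun i => ?_, h⟩
  rw [← h]; exact Finset.single_le_sum (fun j _ => Nat.zero_le _) (mem_univ i)

noncomputable def Phi {q : ℕ} (A : Matrix (Fin q) (Fin q) ℂ) (p : Fin q → ℕ) :
    MvPolynomial (Fin q) ℂ :=
  ∏ i, (∑ j, C (A i j) * X j) ^ p i

lemma Phi_expand {q n : ℕ} (A : Matrix (Fin q) (Fin q) ℂ) {p : Fin q → ℕ} (hp : p ∈ V n q) :
    Phi A p = ∑ s ∈ V n q, C (MG n A s p) * ∏ j, X j ^ s j := by
  have hple := le_V hp
  have h1 : Phi A p = ∑ r ∈ Fintype.piFinset (fun i => Finset.piAntidiag Finset.univ (p i)),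
      ∏ i, ((Nat.multinomial Finset.univ (r i) : MvPolynomial (Fin q) ℂ) *
        ∏ j, (C (A i j) * X j) ^ r i j) := by
    rw [Phi]
    simp_rw [Finset.sum_pow_eq_sum_piAntidiag]
    rw [Finset.prod_univ_sum]
  rw [h1]
  have hset : Fintype.piFinset (fun i => Finset.piAntidiag (Finset.univ : Finset (Fin q)) (p i)) =
      (Fintype.piFinset fun _ : Fin q => Fintype.piFinset fun _ : Fin q =>
        Finset.range (n + 1)).filter (fun r => ∀ i, ∑ j, r i j = p i) := by
    ext r
    simp only [Fintype.mem_piFinset, Finset.mem_piAntidiag, Finset.mem_filter,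
      Finset.mem_range, Nat.lt_succ_iff, Finset.mem_univ, ne_eq]
    constructor
    · intro h
      refine ⟨fun i j => ?_, fun i => (h i).1⟩
      calc r i j ≤ ∑ j', r i j' := Finset.single_le_sum (fun _ _ => Nat.zero_le _) (mem_univ j)
        _ = p i := (h i).1
        _ ≤ n := hple i
    · intro h i
      exact ⟨h.2 i, fun _ _ => trivial⟩
  rw [hset]
  have hmaps : ∀ r ∈ (Fintype.piFinset fun _ : Fin q => Fintype.piFinset fun _ : Fin q =>
        Finset.range (n + 1)).filter (fun r => ∀ i, ∑ j, r i j = p i),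
      (fun j => ∑ i, r i j) ∈ V n q := by
    intro r hr
    rw [Finset.mem_filter] at hr
    apply mem_V_of
    rw [Finset.sum_comm]
    rw [Finset.sum_congr rfl fun i _ => hr.2 i]
    exact sum_V hp
  rw [← Finset.sum_fiberwise_of_maps_to hmaps]
  refine Finset.sum_congr rfl fun s hs => ?_
  rw [MG, map_sum, Finset.sum_mul, Finset.filter_filter]
  have hss : ((Fintype.piFinset fun _ : Fin q => Fintype.piFinset fun _ : Fin q =>
        Finset.range (n + 1)).filter
        (fun r => (∀ i, ∑ j, r i j = p i) ∧ (fun j => ∑ i, r i j) = s)) =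
      ((Fintype.piFinset fun _ : Fin q => Fintype.piFinset fun _ : Fin q =>
        Finset.range (n + 1)).filter
        (fun r => (∀ i, ∑ j, r i j = p i) ∧ (∀ j, ∑ i, r i j = s j))) := by
    apply Finset.filter_congr
    intro r _
    rw [_root_.funext_iff]
  rw [hss]
  refine Finset.sum_congr rfl fun r hr => ?_
  rw [Finset.mem_filter] at hr
  obtain ⟨-, hrow, hcol⟩ := hr
  have hmult : (∏ i, (Nat.multinomial Finset.univ (r i) : ℂ)) =
      ((∏ i, Nat.factorial (p i) : ℕ) : ℂ) / ((∏ i, ∏ j, Nat.factorial (r i j) : ℕ) : ℂ) := by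
    push_cast
    rw [← Finset.prod_div_distrib]
    refine Finset.prod_congr rfl fun i _ => ?_
    have hspec := Nat.multinomial_spec Finset.univ (r i)
    rw [hrow i] at hspec
    have hne : (∏ j, ((Nat.factorial (r i j) : ℕ) : ℂ)) ≠ 0 :=
      Finset.prod_ne_zero_iff.mpr fun j _ => Nat.cast_ne_zero.mpr (Nat.factorial_ne_zero _)
    rw [eq_div_iff hne, mul_comm]
    exact_mod_cast congrArg (Nat.cast : ℕ → ℂ) hspec
  have hX : (∏ i, ∏ j, (X j : MvPolynomial (Fin q) ℂ) ^ r i j) = ∏ j, (X j : MvPolynomial (Fin q) ℂ) ^ s j := by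
    rw [Finset.prod_comm]
    refine Finset.prod_congr rfl fun j _ => ?_
    rw [Finset.prod_pow_eq_pow_sum, hcol j]
  have hc : ∀ m : ℕ, ((m : ℕ) : MvPolynomial (Fin q) ℂ) = C (m : ℂ) := fun m =>
    (map_natCast (C : ℂ →+* MvPolynomial (Fin q) ℂ) m).symm
  simp_rw [mul_pow, ← C_pow, Finset.prod_mul_distrib, hc]
  rw [hX, ← hmult]
  simp only [map_mul, map_prod]
  ring

lemma Phi_aeval {q : ℕ} (A B : Matrix (Fin q) (Fin q) ℂ) (p : Fin q → ℕ) :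
    MvPolynomial.aeval (fun j => ∑ k, C (B j k) * X k) (Phi A p) = Phi (A * B) p := by
  rw [Phi, Phi, map_prod]
  refine Finset.prod_congr rfl fun i _ => ?_
  rw [map_pow]
  congr 1
  rw [map_sum]
  simp only [map_mul, aeval_C, aeval_X, algebraMap_eq]
  simp_rw [Finset.mul_sum, ← mul_assoc, ← map_mul]
  rw [Finset.sum_comm]
  refine Finset.sum_congr rfl fun k _ => ?_
  rw [← Finset.sum_mul, ← map_sum, Matrix.mul_apply]

lemma extract {q n : ℕ} {a b : (Fin q → ℕ) → ℂ}
    (h : ∑ u ∈ V n q, C (a u) * ∏ j, (X j : MvPolynomial (Fin q) ℂ) ^ u j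
       = ∑ u ∈ V n q, C (b u) * ∏ j, (X j : MvPolynomial (Fin q) ℂ) ^ u j)
    {t : Fin q → ℕ} (ht : t ∈ V n q) : a t = b t := by
  have key : ∀ (c : ℂ) (u : Fin q → ℕ), C c * ∏ j, (X j : MvPolynomial (Fin q) ℂ) ^ u j
      = monomial (Finsupp.equivFunOnFinite.symm u) c := by
    intro c u
    rw [monomial_eq]
    congr 1
    rw [Finsupp.prod_fintype]
    · rfl
    · intro j; exact pow_zero _
  simp_rw [key] at h
  have h2 := congrArg (MvPolynomial.coeff (Finsupp.equivFunOnFinite.symm t)) h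
  simp only [MvPolynomial.coeff_sum, MvPolynomial.coeff_monomial] at h2
  rwa [Finset.sum_eq_single_of_mem t ht ?_, Finset.sum_eq_single_of_mem t ht ?_,
    if_pos rfl, if_pos rfl] at h2 <;>
  · intro u hu hne
    rw [if_neg]
    exact fun e => hne (Finsupp.equivFunOnFinite.symm.injective e)

lemma MG_comp {q n : ℕ} (A B : Matrix (Fin q) (Fin q) ℂ) {p t : Fin q → ℕ}
    (hp : p ∈ V n q) (ht : t ∈ V n q) :
    MG n (A * B) t p = ∑ s ∈ V n q, MG n A s p * MG n B t s := by
  refine extract (n := n) (a := fun u => MG n (A * B) u p)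
    (b := fun u => ∑ s ∈ V n q, MG n A s p * MG n B u s) ?_ ht
  rw [← Phi_expand (A * B) hp, ← Phi_aeval A B p, Phi_expand A hp, map_sum]
  have step : ∀ s ∈ V n q, MvPolynomial.aeval (fun j => ∑ k, C (B j k) * X k)
        (C (MG n A s p) * ∏ j, (X j : MvPolynomial (Fin q) ℂ) ^ s j)
      = ∑ u ∈ V n q, C (MG n A s p * MG n B u s) * ∏ j, (X j : MvPolynomial (Fin q) ℂ) ^ u j := by
    intro s hs
    rw [map_mul, map_prod]
    simp only [map_pow, aeval_C, aeval_X, algebraMap_eq]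
    rw [show (∏ j, (∑ k, C (B j k) * X k) ^ s j) = Phi B s from rfl, Phi_expand B hs,
      Finset.mul_sum]
    simp_rw [← mul_assoc, ← map_mul]
  rw [Finset.sum_congr rfl step, Finset.sum_comm]
  refine Finset.sum_congr rfl fun u _ => ?_
  rw [← Finset.sum_mul, ← map_sum]

lemma MG_transpose {q n : ℕ} (A : Matrix (Fin q) (Fin q) ℂ) (p s : Fin q → ℕ) :
    ((∏ i, Nat.factorial (p i) : ℕ) : ℂ) * MG n A p s =
    ((∏ i, Nat.factorial (s i) : ℕ) : ℂ) * MG n A.transpose s p := by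
  rw [MG, MG, Finset.mul_sum, Finset.mul_sum]
  refine Finset.sum_nbij' (fun r => fun i j => r j i) (fun r => fun i j => r j i)
    ?_ ?_ (fun _ _ => rfl) (fun _ _ => rfl) ?_
  · intro r hr
    rw [Finset.mem_filter] at hr ⊢
    obtain ⟨hb, h1, h2⟩ := hr
    refine ⟨?_, h2, h1⟩
    simp only [Fintype.mem_piFinset] at hb ⊢
    exact fun i j => hb j i
  · intro r hr
    rw [Finset.mem_filter] at hr ⊢
    obtain ⟨hb, h1, h2⟩ := hr
    refine ⟨?_, h2, h1⟩
    simp only [Fintype.mem_piFinset] at hb ⊢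
    exact fun i j => hb j i
  · intro r _
    have e1 : (∏ i, ∏ j, Nat.factorial (r j i)) = ∏ i, ∏ j, Nat.factorial (r i j) :=
      Finset.prod_comm
    have e2 : (∏ i, ∏ j, A.transpose i j ^ r j i) = ∏ i, ∏ j, A i j ^ r i j := by
      rw [Finset.prod_comm]
      exact Finset.prod_congr rfl fun i _ => Finset.prod_congr rfl fun j _ => rfl
    rw [e1, e2]
    ring

lemma MG_conj {q n : ℕ} (A : Matrix (Fin q) (Fin q) ℂ) (p s : Fin q → ℕ) :
    (starRingEnd ℂ) (MG n A p s) = MG n (A.map (starRingEnd ℂ)) p s := by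
  rw [MG, MG, map_sum]
  refine Finset.sum_congr rfl fun r _ => ?_
  simp only [map_mul, map_div₀, map_natCast, map_prod, map_pow, Matrix.map_apply]

lemma MG_smul_one {q n : ℕ} (c : ℂ) {p t : Fin q → ℕ} (hp : p ∈ V n q) :
    MG n (c • (1 : Matrix (Fin q) (Fin q) ℂ)) t p = if p = t then c ^ n else 0 := by
  have hentry : ∀ i j : Fin q, (c • (1 : Matrix (Fin q) (Fin q) ℂ)) i j
      = if i = j then c else 0 := by
    intro i j
    simp [Matrix.smul_apply, Matrix.one_apply, mul_ite]
  rw [MG]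
  by_cases h : p = t
  · subst h
    rw [if_pos rfl]
    rw [Finset.sum_eq_single_of_mem (fun i j => if i = j then p i else 0) ?_ ?_]
    · have hfac : (∏ i, ∏ j, Nat.factorial (if i = j then p i else 0)) =
          ∏ i, Nat.factorial (p i) := by
        refine Finset.prod_congr rfl fun i _ => ?_
        rw [Finset.prod_eq_single i (fun j _ hj => by rw [if_neg (Ne.symm hj)]; rfl)
          (fun hi => absurd (Finset.mem_univ i) hi)]
        rw [if_pos rfl]
      have hprod : (∏ i, ∏ j, (c • (1 : Matrix (Fin q) (Fin q) ℂ)) i j ^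
          (if i = j then p i else 0)) = c ^ n := by
        have : ∀ i : Fin q, (∏ j, (c • (1 : Matrix (Fin q) (Fin q) ℂ)) i j ^
            (if i = j then p i else 0)) = c ^ p i := by
          intro i
          rw [Finset.prod_eq_single i (fun j _ hj => by
            rw [if_neg (Ne.symm hj), pow_zero]) (fun hi => absurd (Finset.mem_univ i) hi)]
          rw [if_pos rfl, hentry, if_pos rfl]
        rw [Finset.prod_congr rfl fun i _ => this i, Finset.prod_pow_eq_pow_sum, sum_V hp]
      rw [hfac, hprod]
      have hne : ((∏ i, Nat.factorial (p i) : ℕ) : ℂ) ≠ 0 :=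
        Nat.cast_ne_zero.mpr (Finset.prod_ne_zero_iff.mpr fun i _ => Nat.factorial_ne_zero _)
      rw [div_self hne, one_mul]
    · rw [Finset.mem_filter]
      refine ⟨?_, fun i => ?_, fun j => ?_⟩
      · simp only [Fintype.mem_piFinset, Finset.mem_range, Nat.lt_succ_iff]
        intro i j
        split_ifs
        · exact le_V hp i
        · exact Nat.zero_le _
      · rw [Finset.sum_eq_single i (fun j _ hj => by simp [Ne.symm hj])
          (fun hi => absurd (Finset.mem_univ i) hi)]
        simp
      · rw [Finset.sum_eq_single j (fun i _ hi => by simp [hi])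
          (fun hi => absurd (Finset.mem_univ j) hi)]
        simp
    · intro r hr hne
      rw [Finset.mem_filter] at hr
      obtain ⟨-, hrow, hcol⟩ := hr
      by_cases hd : ∀ i j, i ≠ j → r i j = 0
      · exfalso
        apply hne
        funext i j
        by_cases hij : i = j
        · subst hij
          rw [if_pos rfl, ← hrow i, Finset.sum_eq_single i (fun j _ hj => hd i j (Ne.symm hj))
            (fun hi => absurd (Finset.mem_univ i) hi)]
        · rw [if_neg hij, hd i j hij]
      · push_neg at hd
        obtain ⟨i, j, hij, hrij⟩ := hd
        have hz : (∏ i, ∏ j, (c • (1 : Matrix (Fin q) (Fin q) ℂ)) i j ^ r i j) = 0 := by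
          apply Finset.prod_eq_zero (Finset.mem_univ i)
          apply Finset.prod_eq_zero (Finset.mem_univ j)
          rw [hentry, if_neg hij, zero_pow hrij]
        rw [hz, mul_zero]
  · rw [if_neg h]
    apply Finset.sum_eq_zero
    intro r hr
    rw [Finset.mem_filter] at hr
    obtain ⟨-, hrow, hcol⟩ := hr
    by_cases hd : ∀ i j, i ≠ j → r i j = 0
    · exfalso
      apply h
      funext i
      have h1 : p i = r i i := by
        rw [← hrow i, Finset.sum_eq_single i (fun j _ hj => hd i j (Ne.symm hj))
          (fun hi => absurd (Finset.mem_univ i) hi)]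
      have h2 : t i = r i i := by
        rw [← hcol i, Finset.sum_eq_single i (fun j _ hj => hd j i hj)
          (fun hi => absurd (Finset.mem_univ i) hi)]
      rw [h1, h2]
    · push_neg at hd
      obtain ⟨i, j, hij, hrij⟩ := hd
      have : (∏ i, ∏ j, (c • (1 : Matrix (Fin q) (Fin q) ℂ)) i j ^ r i j) = 0 := by
        apply Finset.prod_eq_zero (Finset.mem_univ i)
        apply Finset.prod_eq_zero (Finset.mem_univ j)
        rw [hentry, if_neg hij, zero_pow hrij]
      rw [this, mul_zero]

theorem stmt2 (q n : ℕ) (hq : 2 ≤ q) (hn : 0 < n)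
    (G : Matrix (Fin q) (Fin q) ℂ) (hG : G * G.conjTranspose = (q : ℂ) • 1)
    (p t : Fin q → ℕ) (hp : p ∈ V n q) (ht : t ∈ V n q) :
    ∑ s ∈ V n q, (1 / ((∏ i, Nat.factorial (s i) : ℕ) : ℂ)) * MG n G p s * (starRingEnd ℂ) (MG n G t s) =
      (q : ℂ) ^ n / ((∏ i, Nat.factorial (p i) : ℕ) : ℂ) * (if p = t then 1 else 0) := by
  have hq0 : (q : ℂ) ≠ 0 := Nat.cast_ne_zero.mpr (by omega)
  have h1 : G * ((q : ℂ)⁻¹ • G.conjTranspose) = 1 := by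
    rw [Matrix.mul_smul, hG, smul_smul, inv_mul_cancel₀ hq0, one_smul]
  have h2 : ((q : ℂ)⁻¹ • G.conjTranspose) * G = 1 := mul_eq_one_comm.mp h1
  rw [Matrix.smul_mul] at h2
  have h3 : G.conjTranspose * G = (q : ℂ) • 1 := by
    calc G.conjTranspose * G = (q : ℂ) • ((q : ℂ)⁻¹ • (G.conjTranspose * G)) := by
          rw [smul_smul, mul_inv_cancel₀ hq0, one_smul]
      _ = (q : ℂ) • 1 := by rw [h2]
  have hGG : G.transpose * G.map (starRingEnd ℂ) = (q : ℂ) • 1 := by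
    have h4 := congrArg Matrix.transpose h3
    rw [Matrix.transpose_mul, Matrix.transpose_smul, Matrix.transpose_one] at h4
    rwa [show G.conjTranspose.transpose = G.map (starRingEnd ℂ) by
      ext i j; simp [Matrix.conjTranspose_apply, Matrix.map_apply]] at h4
  have hp0 : ((∏ i, Nat.factorial (p i) : ℕ) : ℂ) ≠ 0 :=
    Nat.cast_ne_zero.mpr (Finset.prod_ne_zero_iff.mpr fun i _ => Nat.factorial_ne_zero _)
  calc ∑ s ∈ V n q, (1 / ((∏ i, Nat.factorial (s i) : ℕ) : ℂ)) * MG n G p s *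
        (starRingEnd ℂ) (MG n G t s)
      = ∑ s ∈ V n q, (1 / ((∏ i, Nat.factorial (p i) : ℕ) : ℂ)) *
          (MG n G.transpose s p * MG n (G.map (starRingEnd ℂ)) t s) := by
        refine Finset.sum_congr rfl fun s hs => ?_
        rw [MG_conj]
        have hs0 : ((∏ i, Nat.factorial (s i) : ℕ) : ℂ) ≠ 0 :=
          Nat.cast_ne_zero.mpr (Finset.prod_ne_zero_iff.mpr fun i _ => Nat.factorial_ne_zero _)
        have hG1 : MG n G p s = ((∏ i, Nat.factorial (s i) : ℕ) : ℂ) *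
            MG n G.transpose s p / ((∏ i, Nat.factorial (p i) : ℕ) : ℂ) := by
          rw [eq_div_iff hp0, mul_comm]
          exact MG_transpose G p s
        rw [hG1]
        have hs0' : (∏ i, ((s i).factorial : ℂ)) ≠ 0 := by
          rw [← Nat.cast_prod]; exact hs0
        field_simp
    _ = (1 / ((∏ i, Nat.factorial (p i) : ℕ) : ℂ)) * MG n ((q : ℂ) • 1) t p := by
        rw [← Finset.mul_sum, ← MG_comp G.transpose (G.map (starRingEnd ℂ)) hp ht, hGG]
    _ = (q : ℂ) ^ n / ((∏ i, Nat.factorial (p i) : ℕ) : ℂ) * (if p = t then 1 else 0) := by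
        rw [MG_smul_one (q : ℂ) hp]
        split_ifs
        · ring
        · ring
end

section
/- If G is a symmetric q×q complex matrix (G = Gᵀ), then for all p,s ∈ V(n,q): MG(s;p) = (p!/s!) · MG(p;s), where p! = Π_i p_i!. -/
open Finset

theorem stmt3 (q n : ℕ) (hq : 2 ≤ q) (hn : 0 < n)
    (G : Matrix (Fin q) (Fin q) ℂ) (hG : ∀ i j, G i j = G j i)
    (p s : Fin q → ℕ) (hp : p ∈ V n q) (hs : s ∈ V n q) :
    MG n G s p = ((∏ i, Nat.factorial (p i) : ℕ) : ℂ) / ((∏ i, Nat.factorial (s i) : ℕ) : ℂ) * MG n G p s := by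
  classical
  have hs0 : (∏ i, ((s i).factorial : ℂ)) ≠ 0 :=
    Finset.prod_ne_zero_iff.mpr fun i _ => by
      exact_mod_cast Nat.cast_ne_zero.mpr (Nat.factorial_ne_zero _)
  unfold MG
  rw [Finset.mul_sum]
  refine Finset.sum_nbij' (fun r => fun i j => r j i) (fun r => fun i j => r j i)
    ?_ ?_ ?_ ?_ ?_
  · intro r hr
    simp only [Finset.mem_filter, Fintype.mem_piFinset] at hr ⊢
    exact ⟨fun i j => hr.1 j i, hr.2.2, hr.2.1⟩
  · intro r hr
    simp only [Finset.mem_filter, Fintype.mem_piFinset] at hr ⊢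
    exact ⟨fun i j => hr.1 j i, hr.2.2, hr.2.1⟩
  · intro r _; rfl
  · intro r _; rfl
  · intro r hr
    simp only [Finset.mem_filter, Fintype.mem_piFinset] at hr
    have h1 : (∏ i, ∏ j, Nat.factorial (r j i)) = ∏ i, ∏ j, Nat.factorial (r i j) :=
      Finset.prod_comm
    have h2 : (∏ i, ∏ j, G i j ^ r j i) = ∏ i, ∏ j, G i j ^ r i j := by
      rw [Finset.prod_comm]
      exact Finset.prod_congr rfl fun i _ => Finset.prod_congr rfl fun j _ => by rw [hG]
    rw [h1, h2]
    field_simp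
    rw [mul_div_mul_right _ _ (by exact_mod_cast hs0)]
end

section
/- Let G be a q×q complex matrix with symmetric core (g_{ij} = g_{ji} for all i,j ≥ 1), first row entries g_{0j} = 1 for all j, and first column entries g_{i0} = -1 for all i ≥ 1. Then for all p,s ∈ V(n,q): MG(s;p) = (-1)^{s_0 + p_0} · (p!/s!) · MG(p;s). -/
open Finset

theorem stmt4 (q n : ℕ) [NeZero q] (hq : 2 ≤ q) (hn : 0 < n)
    (G : Matrix (Fin q) (Fin q) ℂ)
    (hrow : ∀ j, G 0 j = 1) (hcol : ∀ i, i ≠ 0 → G i 0 = -1)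
    (hcore : ∀ i j, i ≠ 0 → j ≠ 0 → G i j = G j i)
    (p s : Fin q → ℕ) (hp : p ∈ V n q) (hs : s ∈ V n q) :
    MG n G s p = (-1 : ℂ) ^ (s 0 + p 0) * (((∏ i, Nat.factorial (p i) : ℕ) : ℂ) / ((∏ i, Nat.factorial (s i) : ℕ) : ℂ)) * MG n G p s := by
  classical
  -- key sign lemma
  have key : ∀ a : Fin q → Fin q → ℕ, (∀ i, ∑ j, a i j = p i) → (∀ j, ∑ i, a i j = s j) →
      (∏ i, ∏ j, G j i ^ a i j) = (-1 : ℂ) ^ (s 0 + p 0) * ∏ i, ∏ j, G i j ^ a i j := by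
    intro a hrowsum hcolsum
    have hpt : ∀ i j, (G j i : ℂ) ^ a i j =
        ((if (i = 0 ↔ j = 0) then (1 : ℂ) else -1) * G i j) ^ a i j := by
      intro i j
      by_cases hi : i = 0 <;> by_cases hj : j = 0
      · subst hi; subst hj; simp [hrow]
      · subst hi; rw [hcol j hj, hrow j]
        simp [hj]
      · subst hj; rw [hrow i, hcol i hi]
        simp [hi]
      · rw [hcore i j hi hj]
        simp [hi, hj]
    have h1 : (∏ i, ∏ j, G j i ^ a i j) =
        (∏ i, ∏ j, (if (i = 0 ↔ j = 0) then (1 : ℂ) else -1) ^ a i j) *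
          ∏ i, ∏ j, G i j ^ a i j := by
      rw [← Finset.prod_mul_distrib]
      refine Finset.prod_congr rfl fun i _ => ?_
      rw [← Finset.prod_mul_distrib]
      exact Finset.prod_congr rfl fun j _ => by rw [hpt i j, mul_pow]
    have h2 : (∏ i, ∏ j, (if (i = 0 ↔ j = 0) then (1 : ℂ) else -1) ^ a i j) =
        (-1 : ℂ) ^ (∑ i, ∑ j, if (i = 0 ↔ j = 0) then 0 else a i j) := by
      rw [← Finset.prod_pow_eq_pow_sum]
      refine Finset.prod_congr rfl fun i _ => ?_
      rw [← Finset.prod_pow_eq_pow_sum]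
      refine Finset.prod_congr rfl fun j _ => ?_
      by_cases h : (i = 0 ↔ j = 0) <;> simp [h]
    set T := ∑ i, ∑ j, if (i = 0 ↔ j = 0) then 0 else a i j with hT
    have harith : T + 2 * a 0 0 = s 0 + p 0 := by
      have e1 : (∑ i, ∑ j, if i = (0 : Fin q) ∧ j = (0 : Fin q) then 2 * a i j else 0)
          = 2 * a 0 0 := by
        rw [Finset.sum_eq_single 0]
        · rw [Finset.sum_eq_single 0] <;> simp +contextual
        · intro b _ hb; exact Finset.sum_eq_zero fun j _ => by simp [hb]
        · simp
      have e2 : T + 2 * a 0 0 =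
          ∑ i, ∑ j, ((if i = (0:Fin q) then a i j else 0) + (if j = (0:Fin q) then a i j else 0)) := by
        rw [hT, ← e1, ← Finset.sum_add_distrib]
        refine Finset.sum_congr rfl fun i _ => ?_
        rw [← Finset.sum_add_distrib]
        refine Finset.sum_congr rfl fun j _ => ?_
        by_cases hi : i = 0 <;> by_cases hj : j = 0 <;> simp [hi, hj] <;> ring
      rw [e2]
      have e3 : ∑ i, ∑ j, ((if i = (0:Fin q) then a i j else 0) + (if j = (0:Fin q) then a i j else 0))
          = (∑ j, a 0 j) + ∑ i, a i 0 := by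
        simp only [Finset.sum_add_distrib]
        congr 1
        · rw [Finset.sum_eq_single 0]
          · simp
          · intro b _ hb; exact Finset.sum_eq_zero fun j _ => by simp [hb]
          · simp
        · refine Finset.sum_congr rfl fun i _ => ?_
          rw [Finset.sum_eq_single 0] <;> simp +contextual
      rw [e3, hrowsum 0, hcolsum 0, Nat.add_comm]
    have hsign : (-1 : ℂ) ^ T = (-1 : ℂ) ^ (s 0 + p 0) := by
      rw [← harith, pow_add, pow_mul]
      norm_num
    rw [h1, h2, hsign]
  -- nonvanishing of factorials
  have hfacne : ∀ (a : Fin q → Fin q → ℕ),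
      ((∏ i, ∏ j, Nat.factorial (a i j) : ℕ) : ℂ) ≠ 0 := by
    intro a
    exact Nat.cast_ne_zero.mpr (Finset.prod_ne_zero_iff.mpr fun i _ =>
      Finset.prod_ne_zero_iff.mpr fun j _ => Nat.factorial_ne_zero _)
  have hsne : ((∏ i, Nat.factorial (s i) : ℕ) : ℂ) ≠ 0 :=
    Nat.cast_ne_zero.mpr (Finset.prod_ne_zero_iff.mpr fun i _ => Nat.factorial_ne_zero _)
  have heven : ∀ k : ℕ, (-1 : ℂ) ^ (k * 2) = 1 := by
    intro k; rw [mul_comm, pow_mul]; norm_num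
  rw [MG, MG, Finset.mul_sum]
  refine Finset.sum_nbij' (fun a x y => a y x) (fun a x y => a y x) ?_ ?_ ?_ ?_ ?_
  · intro a ha
    simp only [Finset.mem_filter, Fintype.mem_piFinset, Finset.mem_range] at ha ⊢
    obtain ⟨hb, hr, hc⟩ := ha
    exact ⟨fun i j => hb j i, hc, hr⟩
  · intro a ha
    simp only [Finset.mem_filter, Fintype.mem_piFinset, Finset.mem_range] at ha ⊢
    obtain ⟨hb, hr, hc⟩ := ha
    exact ⟨fun i j => hb j i, hc, hr⟩
  · intro a _; rfl
  · intro a _; rfl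
  · intro a ha
    simp only [Finset.mem_filter, Fintype.mem_piFinset, Finset.mem_range] at ha
    obtain ⟨hb, hr, hc⟩ := ha
    have hfac : (∏ i, ∏ j, Nat.factorial (a j i)) = ∏ i, ∏ j, Nat.factorial (a i j) :=
      Finset.prod_comm
    have hGp : (∏ i, ∏ j, G i j ^ a j i) = ∏ i, ∏ j, G j i ^ a i j := Finset.prod_comm
    rw [hfac, hGp, key a hr hc]
    have hT := hfacne a
    have hs2 : (-1 : ℂ) ^ (s 0 + p 0) * (-1 : ℂ) ^ (s 0 + p 0) = 1 := by
      rw [← pow_add, ← two_mul, mul_comm, heven]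
    have hT' : (∏ x : Fin q, ∏ i : Fin q, ((a x i).factorial : ℂ)) ≠ 0 := by
      push_cast at hT; exact hT
    have hsne' : (∏ i : Fin q, ((s i).factorial : ℂ)) ≠ 0 := by
      push_cast at hsne; exact hsne
    field_simp
    linear_combination (-(((∏ i, Nat.factorial (p i) : ℕ) : ℂ) * (∏ i, ∏ j, G i j ^ a i j))) * hs2
end

section
/- If G is a symmetric generalized Hadamard matrix (G = Gᵀ and G·conj(G)ᵀ = q·I_q), then for all p,t ∈ V(n,q): Σ_{s ∈ V(n,q)} MG(p;s) · conj(MG(s;t)) = qⁿ · δ_{p,t}. -/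
open Finset

open scoped Classical

namespace Stmt5Aux

lemma mem_V {n q : ℕ} {p : Fin q → ℕ} : p ∈ V n q ↔ (∀ i, p i ≤ n) ∧ ∑ i, p i = n := by
  simp [V, Fintype.mem_piFinset, Nat.lt_succ_iff]

/-- Function-to-finsupp conversion. -/
noncomputable def fs {q : ℕ} (p : Fin q → ℕ) : Fin q →₀ ℕ := Finsupp.equivFunOnFinite.symm p

@[simp] lemma fs_apply {q : ℕ} (p : Fin q → ℕ) (j : Fin q) : fs p j = p j := rfl

lemma fs_inj {q : ℕ} {p p' : Fin q → ℕ} (h : fs p = fs p') : p = p' :=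
  Finsupp.equivFunOnFinite.symm.injective h

/-- Linear form row `i` of matrix `A`. -/
noncomputable def LF {q : ℕ} (A : Matrix (Fin q) (Fin q) ℂ) (i : Fin q) :
    MvPolynomial (Fin q) ℂ := ∑ j, MvPolynomial.C (A i j) * MvPolynomial.X j

noncomputable def PP {q : ℕ} (A : Matrix (Fin q) (Fin q) ℂ) (s : Fin q → ℕ) :
    MvPolynomial (Fin q) ℂ := ∏ i, (LF A i) ^ (s i)

def RS {q : ℕ} (s : Fin q → ℕ) : Finset (Fin q → Fin q → ℕ) :=
  Fintype.piFinset fun i => Finset.piAntidiag Finset.univ (s i)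

lemma mem_RS {q : ℕ} {s : Fin q → ℕ} {r : Fin q → Fin q → ℕ} :
    r ∈ RS s ↔ ∀ i, ∑ j, r i j = s i := by
  simp [RS, Fintype.mem_piFinset, Finset.mem_piAntidiag]

lemma monomial_fs {q : ℕ} (u : Fin q → ℕ) (c : ℂ) :
    (MvPolynomial.monomial (fs u)) c = MvPolynomial.C c * ∏ j, MvPolynomial.X j ^ u j := by
  rw [MvPolynomial.monomial_eq, Finsupp.prod_pow]
  simp

lemma PP_expand {q : ℕ} (A : Matrix (Fin q) (Fin q) ℂ) (s : Fin q → ℕ) :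
    PP A s = ∑ r ∈ RS s, (MvPolynomial.monomial (fs (fun j => ∑ i, r i j)))
      ((∏ i, (Nat.multinomial Finset.univ (r i) : ℂ)) * ∏ i, ∏ j, A i j ^ r i j) := by
  unfold PP LF
  simp_rw [Finset.sum_pow_eq_sum_piAntidiag]
  rw [Finset.prod_univ_sum]
  refine Finset.sum_congr rfl fun r hr => ?_
  rw [monomial_fs]
  simp_rw [mul_pow, ← MvPolynomial.C_pow]
  rw [Finset.prod_mul_distrib]
  simp_rw [Finset.prod_mul_distrib]
  have hX : (∏ i : Fin q, ∏ j : Fin q, MvPolynomial.X (R := ℂ) j ^ r i j)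
      = ∏ j : Fin q, MvPolynomial.X j ^ ∑ i, r i j := by
    rw [Finset.prod_comm]
    exact Finset.prod_congr rfl fun j _ => Finset.prod_pow_eq_pow_sum _ _ _
  rw [hX, MvPolynomial.C_mul]
  have hC : (∏ i : Fin q, ∏ j : Fin q, (MvPolynomial.C (A i j ^ r i j) : MvPolynomial (Fin q) ℂ))
      = MvPolynomial.C (∏ i : Fin q, ∏ j : Fin q, A i j ^ r i j) := by
    rw [map_prod]
    exact Finset.prod_congr rfl fun i _ => (map_prod _ _ _).symm
  have hM : (∏ i : Fin q, ((Nat.multinomial univ (r i) : ℕ) : MvPolynomial (Fin q) ℂ))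
      = MvPolynomial.C (∏ i : Fin q, (Nat.multinomial univ (r i) : ℂ)) := by
    rw [map_prod]
    exact Finset.prod_congr rfl fun i _ => by rw [map_natCast]

  rw [hC, ← hM]
  ring

lemma coeff_PP {q : ℕ} (A : Matrix (Fin q) (Fin q) ℂ) (s p : Fin q → ℕ) :
    MvPolynomial.coeff (fs p) (PP A s) =
      ∑ r ∈ (RS s).filter (fun r => ∀ j, ∑ i, r i j = p j),
        (∏ i, (Nat.multinomial Finset.univ (r i) : ℂ)) * ∏ i, ∏ j, A i j ^ r i j := by
  rw [PP_expand, MvPolynomial.coeff_sum, Finset.sum_filter]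
  refine Finset.sum_congr rfl fun r hr => ?_
  rw [MvPolynomial.coeff_monomial]
  refine if_congr ?_ rfl rfl
  constructor
  · intro h j
    exact congrFun (fs_inj h) j
  · intro h
    have : (fun j => ∑ i, r i j) = p := funext h
    rw [this]

lemma MG_eq_coeff {q n : ℕ} (A : Matrix (Fin q) (Fin q) ℂ) (p s : Fin q → ℕ)
    (hs : ∀ i, s i ≤ n) :
    MG n A p s = MvPolynomial.coeff (fs p) (PP A s) := by
  rw [coeff_PP, MG]
  refine Finset.sum_congr ?_ ?_
  · ext r
    simp only [Finset.mem_filter, Fintype.mem_piFinset, Finset.mem_range, mem_RS,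
      Nat.lt_succ_iff]
    constructor
    · rintro ⟨-, hrow, hcol⟩
      exact ⟨hrow, hcol⟩
    · rintro ⟨hrow, hcol⟩
      refine ⟨fun i j => ?_, hrow, hcol⟩
      have h1 : r i j ≤ ∑ j', r i j' :=
        Finset.single_le_sum (fun _ _ => Nat.zero_le _) (Finset.mem_univ j)
      exact h1.trans ((hrow i).le.trans (hs i))
  · intro r hr
    simp only [Finset.mem_filter, mem_RS] at hr
    obtain ⟨hrow, hcol⟩ := hr
    have key : ((∏ i, Nat.factorial (s i) : ℕ) : ℂ) =
        ((∏ i, ∏ j, Nat.factorial (r i j) : ℕ) : ℂ) *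
          ∏ i, (Nat.multinomial Finset.univ (r i) : ℂ) := by
      push_cast
      rw [← Finset.prod_mul_distrib]
      refine Finset.prod_congr rfl fun i _ => ?_
      rw [← Nat.cast_prod, ← Nat.cast_mul, Nat.multinomial_spec, hrow i]
    have hne : ((∏ i, ∏ j, Nat.factorial (r i j) : ℕ) : ℂ) ≠ 0 := by
      rw [Nat.cast_ne_zero]
      positivity
    have hne' : (∏ x : Fin q, ∏ i' : Fin q, ((r x i').factorial : ℂ)) ≠ 0 := by
      push_cast at hne; exact hne
    rw [key]
    push_cast
    rw [mul_div_assoc, mul_comm (∏ x : Fin q, ∏ i' : Fin q, ((r x i').factorial : ℂ)),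
      div_mul_cancel₀ _ hne']

lemma bind₁_LF {q : ℕ} (A B : Matrix (Fin q) (Fin q) ℂ) (i : Fin q) :
    MvPolynomial.bind₁ (LF B) (LF A i) = LF (A * B) i := by
  unfold LF
  rw [map_sum]
  simp only [map_mul, MvPolynomial.algHom_C, MvPolynomial.algebraMap_eq, MvPolynomial.bind₁_X_right]
  simp_rw [Finset.mul_sum]
  rw [Finset.sum_comm]
  refine Finset.sum_congr rfl fun k _ => ?_
  have step : ∀ j : Fin q, MvPolynomial.C (A i j) *
      (MvPolynomial.C (B j k) * MvPolynomial.X (R := ℂ) k) =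
      MvPolynomial.C (A i j * B j k) * MvPolynomial.X k := by
    intro j; rw [← mul_assoc, ← MvPolynomial.C_mul]
  rw [Finset.sum_congr rfl fun j _ => step j]
  rw [← Finset.sum_mul, ← map_sum, Matrix.mul_apply]

lemma bind₁_PP {q : ℕ} (A B : Matrix (Fin q) (Fin q) ℂ) (t : Fin q → ℕ) :
    MvPolynomial.bind₁ (LF B) (PP A t) = PP (A * B) t := by
  unfold PP
  rw [map_prod]
  simp_rw [map_pow, bind₁_LF]

lemma bind₁_monomial_fs {q : ℕ} (B : Matrix (Fin q) (Fin q) ℂ) (u : Fin q → ℕ) (c : ℂ) :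
    MvPolynomial.bind₁ (LF B) ((MvPolynomial.monomial (fs u)) c) =
      MvPolynomial.C c * PP B u := by
  rw [monomial_fs, map_mul, MvPolynomial.algHom_C, map_prod]
  simp_rw [map_pow, MvPolynomial.bind₁_X_right]
  rfl

lemma comp_sum {q n : ℕ} (A B : Matrix (Fin q) (Fin q) ℂ) (p t : Fin q → ℕ)
    (ht : t ∈ V n q) :
    MvPolynomial.coeff (fs p) (PP (A * B) t) =
      ∑ s ∈ V n q, MG n A s t * MvPolynomial.coeff (fs p) (PP B s) := by
  obtain ⟨htle, htsum⟩ := mem_V.mp ht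
  rw [← bind₁_PP, PP_expand A t, map_sum]
  simp_rw [bind₁_monomial_fs]
  rw [MvPolynomial.coeff_sum]
  simp_rw [MvPolynomial.coeff_C_mul]
  -- fiberwise sum over column sums
  have hmaps : ∀ r ∈ RS t, (fun j => ∑ i, r i j) ∈ V n q := by
    intro r hr
    rw [mem_RS] at hr
    have htot : ∑ j, ∑ i, r i j = n := by
      rw [Finset.sum_comm]
      simp_rw [hr]
      exact htsum
    rw [mem_V]
    refine ⟨fun j => ?_, htot⟩
    calc ∑ i, r i j ≤ ∑ j', ∑ i, r i j' :=
          Finset.single_le_sum (f := fun j' => ∑ i, r i j')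
            (fun _ _ => Nat.zero_le _) (Finset.mem_univ j)
      _ = n := htot
  rw [← Finset.sum_fiberwise_of_maps_to hmaps]
  refine Finset.sum_congr rfl fun s hs => ?_
  rw [MG_eq_coeff A s t htle, coeff_PP]
  rw [Finset.sum_mul]
  have hfilter : (RS t).filter (fun r => (fun j => ∑ i, r i j) = s) =
      (RS t).filter (fun r => ∀ j, ∑ i, r i j = s j) := by
    apply Finset.filter_congr
    intro r _
    constructor
    · intro h j; exact congrFun h j
    · intro h; exact funext h
  rw [hfilter]
  refine Finset.sum_congr rfl fun r hr => ?_
  simp only [Finset.mem_filter] at hr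
  have : (fun j => ∑ i, r i j) = s := funext hr.2
  rw [this]


lemma conj_MG {q n : ℕ} (G : Matrix (Fin q) (Fin q) ℂ) (p s : Fin q → ℕ) :
    (starRingEnd ℂ) (MG n G p s) = MG n (G.map (starRingEnd ℂ)) p s := by
  rw [MG, MG, map_sum]
  refine Finset.sum_congr rfl fun r hr => ?_
  rw [map_mul, map_div₀, map_natCast, map_natCast, map_prod]
  simp_rw [map_prod, map_pow, Matrix.map_apply]

lemma smul_one_apply {q : ℕ} (i j : Fin q) :
    ((q : ℂ) • (1 : Matrix (Fin q) (Fin q) ℂ)) i j = if i = j then (q : ℂ) else 0 := by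
  simp [Matrix.smul_apply, Matrix.one_apply, mul_ite]

lemma MG_smul_one {q n : ℕ} (p t : Fin q → ℕ) (hp : p ∈ V n q) (ht : t ∈ V n q) :
    MG n ((q : ℂ) • (1 : Matrix (Fin q) (Fin q) ℂ)) p t =
      if p = t then (q : ℂ) ^ n else 0 := by
  obtain ⟨htle, htsum⟩ := mem_V.mp ht
  obtain ⟨hple, hpsum⟩ := mem_V.mp hp
  have zeroterm : ∀ r : Fin q → Fin q → ℕ, (∃ i j, i ≠ j ∧ r i j ≠ 0) →
      (∏ i, ∏ j, ((q : ℂ) • (1 : Matrix (Fin q) (Fin q) ℂ)) i j ^ r i j) = 0 := by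
    rintro r ⟨i, j, hij, hrij⟩
    refine Finset.prod_eq_zero (Finset.mem_univ i) ?_
    refine Finset.prod_eq_zero (Finset.mem_univ j) ?_
    rw [smul_one_apply, if_neg hij, zero_pow hrij]
  have diag_eq : ∀ r : Fin q → Fin q → ℕ, (∀ i, ∑ j, r i j = t i) →
      (∀ j, ∑ i, r i j = p j) → (∀ i j, i ≠ j → r i j = 0) →
      (∀ i, r i i = t i) ∧ (∀ j, r j j = p j) := by
    intro r hrow hcol hd
    constructor
    · intro i
      rw [← hrow i]
      exact (Finset.sum_eq_single_of_mem i (Finset.mem_univ i)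
        (fun j _ hj => hd i j (fun h => hj h.symm))).symm
    · intro j
      rw [← hcol j]
      exact (Finset.sum_eq_single_of_mem j (Finset.mem_univ j)
        (fun i _ hi => hd i j hi)).symm
  rw [MG]
  by_cases hpt : p = t
  · subst hpt
    rw [if_pos rfl]
    have hmem : (fun i j => if i = j then p i else 0) ∈
        (Fintype.piFinset fun _ : Fin q => Fintype.piFinset fun _ : Fin q =>
          Finset.range (n + 1)).filter
          (fun r => (∀ i, ∑ j, r i j = p i) ∧ (∀ j, ∑ i, r i j = p j)) := by
      simp only [Finset.mem_filter, Fintype.mem_piFinset, Finset.mem_range, Nat.lt_succ_iff]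
      refine ⟨fun i j => ?_, fun i => ?_, fun j => ?_⟩
      · split
        · exact hple i
        · exact Nat.zero_le n
      · rw [Finset.sum_ite_eq]
        simp
      · rw [Finset.sum_ite_eq']
        simp
    rw [Finset.sum_eq_single_of_mem _ hmem ?_]
    · have hfac : (∏ i, ∏ j, Nat.factorial (if i = j then p i else 0)) =
          ∏ i, Nat.factorial (p i) := by
        refine Finset.prod_congr rfl fun i _ => ?_
        have h1 : ∀ j, Nat.factorial (if i = j then p i else 0) =
            if i = j then Nat.factorial (p i) else 1 := by
          intro j; split <;> simp [Nat.factorial]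
        simp_rw [h1]
        rw [Finset.prod_ite_eq]
        simp
      have hprod : (∏ i, ∏ j, ((q : ℂ) • (1 : Matrix (Fin q) (Fin q) ℂ)) i j ^
          (if i = j then p i else 0)) = (q : ℂ) ^ n := by
        have h3 : ∀ i, (∏ j, ((q : ℂ) • (1 : Matrix (Fin q) (Fin q) ℂ)) i j ^
            (if i = j then p i else 0)) = (q : ℂ) ^ p i := by
          intro i
          have h2 : ∀ j, ((q : ℂ) • (1 : Matrix (Fin q) (Fin q) ℂ)) i j ^
              (if i = j then p i else 0) = if i = j then (q : ℂ) ^ p i else 1 := by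
            intro j
            rw [smul_one_apply]
            split <;> simp
          simp_rw [h2]
          rw [Finset.prod_ite_eq]
          simp
        simp_rw [h3]
        rw [Finset.prod_pow_eq_pow_sum, hpsum]
      rw [hfac, hprod]
      have hne : ((∏ i, Nat.factorial (p i) : ℕ) : ℂ) ≠ 0 := by
        rw [Nat.cast_ne_zero]; positivity
      rw [div_self hne, one_mul]
    · intro r hr hne
      simp only [Finset.mem_filter] at hr
      obtain ⟨-, hrow, hcol⟩ := hr
      have hoff : ∃ i j, i ≠ j ∧ r i j ≠ 0 := by
        by_contra hno
        push_neg at hno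
        apply hne
        funext i j
        by_cases h : i = j
        · subst h
          rw [if_pos rfl]
          exact (diag_eq r hrow hcol (fun i j hij => hno i j hij)).2 i
        · rw [if_neg h]
          exact hno i j h
      rw [zeroterm r hoff, mul_zero]
  · rw [if_neg hpt]
    refine Finset.sum_eq_zero fun r hr => ?_
    simp only [Finset.mem_filter] at hr
    obtain ⟨-, hrow, hcol⟩ := hr
    have hoff : ∃ i j, i ≠ j ∧ r i j ≠ 0 := by
      by_contra hno
      push_neg at hno
      apply hpt
      funext j
      obtain ⟨h1, h2⟩ := diag_eq r hrow hcol (fun i j hij => hno i j hij)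
      rw [← h2 j, h1 j]
    rw [zeroterm r hoff, mul_zero]

end Stmt5Aux

open Stmt5Aux in
theorem stmt5 (q n : ℕ) (hq : 2 ≤ q) (hn : 0 < n)
    (G : Matrix (Fin q) (Fin q) ℂ) (hsymm : ∀ i j, G i j = G j i)
    (hG : G * G.conjTranspose = (q : ℂ) • 1)
    (p t : Fin q → ℕ) (hp : p ∈ V n q) (ht : t ∈ V n q) :
    ∑ s ∈ V n q, MG n G p s * (starRingEnd ℂ) (MG n G s t) =
      (q : ℂ) ^ n * (if p = t then 1 else 0) := by
  have hq0 : (q : ℂ) ≠ 0 := Nat.cast_ne_zero.mpr (by omega)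
  set Gm : Matrix (Fin q) (Fin q) ℂ := G.map (starRingEnd ℂ) with hGm
  have hGH : G.conjTranspose = Gm := by
    ext i j
    rw [Matrix.conjTranspose_apply, hGm, Matrix.map_apply, hsymm]
    rfl
  have hGGm : G * Gm = (q : ℂ) • 1 := by rw [← hGH]; exact hG
  have hGmG : Gm * G = (q : ℂ) • 1 := by
    have h1 : G * ((q : ℂ)⁻¹ • Gm) = 1 := by
      rw [Matrix.mul_smul, hGGm, smul_smul, inv_mul_cancel₀ hq0, one_smul]
    have h2 : ((q : ℂ)⁻¹ • Gm) * G = 1 := mul_eq_one_comm.mp h1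
    have h3 : (q : ℂ) • (((q : ℂ)⁻¹ • Gm) * G) = (q : ℂ) • (1 : Matrix (Fin q) (Fin q) ℂ) :=
      congrArg _ h2
    rwa [Matrix.smul_mul, smul_smul, mul_inv_cancel₀ hq0, one_smul] at h3
  obtain ⟨htle, htsum⟩ := mem_V.mp ht
  have key : ∑ s ∈ V n q, MG n G p s * (starRingEnd ℂ) (MG n G s t) =
      MG n (Gm * G) p t := by
    rw [MG_eq_coeff (Gm * G) p t htle, comp_sum Gm G p t ht]
    refine Finset.sum_congr rfl fun s hs => ?_
    obtain ⟨hsle, -⟩ := mem_V.mp hs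
    rw [conj_MG, ← MG_eq_coeff G p s hsle, mul_comm]
  rw [key, hGmG, MG_smul_one p t hp ht]
  split <;> simp
end

section
/- Let G be a symmetric generalized Hadamard matrix and γ : V(n,q) → ℂ a function of the form γ(x) = Σ_{s ∈ V(n,q)} α_s · MG(x;s) with coefficients α_s ∈ ℂ. Then for every ℓ ∈ V(n,q): α_ℓ = q^{-n} · Σ_{i ∈ V(n,q)} γ(i) · conj(MG(ℓ;i)). -/
open Finset

open scoped Classical in
noncomputable def Rset (n q : ℕ) (p s : Fin q → ℕ) : Finset (Fin q → Fin q → ℕ) :=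
  (Fintype.piFinset fun _ : Fin q => Fintype.piFinset fun _ : Fin q =>
      Finset.range (n + 1)).filter
      (fun r => (∀ i, ∑ j, r i j = s i) ∧ (∀ j, ∑ i, r i j = p j))

theorem MG_eq {q : ℕ} (n : ℕ) (G : Matrix (Fin q) (Fin q) ℂ) (p s : Fin q → ℕ) :
    MG n G p s = ∑ r ∈ Rset n q p s,
      ((∏ i, Nat.factorial (s i) : ℕ) : ℂ) / ((∏ i, ∏ j, Nat.factorial (r i j) : ℕ) : ℂ) *
      ∏ i, ∏ j, G i j ^ r i j := rfl

theorem mem_V {n q : ℕ} {p : Fin q → ℕ} : p ∈ V n q ↔ (∀ i, p i ≤ n) ∧ ∑ i, p i = n := by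
  simp [V, Fintype.mem_piFinset, Nat.lt_succ_iff]

theorem mem_Rset {n q : ℕ} {p s r} : r ∈ Rset n q p s ↔
    (∀ i j, r i j ≤ n) ∧ (∀ i, ∑ j, r i j = s i) ∧ (∀ j, ∑ i, r i j = p j) := by
  classical
  simp [Rset, Fintype.mem_piFinset, Nat.lt_succ_iff, forall_and]

noncomputable def D {q : ℕ} (n : ℕ) (G : Matrix (Fin q) (Fin q) ℂ)
    (p s : Fin q → ℕ) : ℂ :=
  ∑ r ∈ Rset n q p s,
    ((∏ j, Nat.multinomial Finset.univ (fun i => r i j) : ℕ) : ℂ) *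
      ∏ i, ∏ j, G i j ^ r i j

theorem fact_ne_zero {q : ℕ} (s : Fin q → ℕ) :
    ((∏ i, Nat.factorial (s i) : ℕ) : ℂ) ≠ 0 := by
  exact Nat.cast_ne_zero.mpr (Finset.prod_ne_zero_iff.mpr fun i _ => (Nat.factorial_pos _).ne')

theorem MG_D_rel {q : ℕ} (n : ℕ) (G : Matrix (Fin q) (Fin q) ℂ) (p s : Fin q → ℕ) :
    ((∏ j, Nat.factorial (p j) : ℕ) : ℂ) * MG n G p s
      = ((∏ i, Nat.factorial (s i) : ℕ) : ℂ) * D n G p s := by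
  rw [MG_eq, D, Finset.mul_sum, Finset.mul_sum]
  refine Finset.sum_congr rfl fun r hr => ?_
  obtain ⟨-, -, hcol⟩ := mem_Rset.mp hr
  have key : (∏ j, Nat.factorial (p j)) =
      (∏ i, ∏ j, Nat.factorial (r i j)) * ∏ j, Nat.multinomial Finset.univ (fun i => r i j) := by
    rw [Finset.prod_comm, ← Finset.prod_mul_distrib]
    refine Finset.prod_congr rfl fun j _ => ?_
    rw [Nat.multinomial_spec, hcol j]
  have hrne : ((∏ i, ∏ j, Nat.factorial (r i j) : ℕ) : ℂ) ≠ 0 := by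
    exact Nat.cast_ne_zero.mpr (Finset.prod_ne_zero_iff.mpr fun i _ =>
      (Finset.prod_ne_zero_iff.mpr fun j _ => (Nat.factorial_pos _).ne'))
  rw [key]
  have h2 : ((∏ i, ∏ j, Nat.factorial (r i j) : ℕ) : ℂ) ≠ 0 := hrne
  push_cast at h2 ⊢
  field_simp

open MvPolynomial

noncomputable def Lf {q : ℕ} (G : Matrix (Fin q) (Fin q) ℂ) (j : Fin q) :
    MvPolynomial (Fin q) ℂ := ∑ i, C (G i j) * X i

noncomputable def toF {q : ℕ} (s : Fin q → ℕ) : Fin q →₀ ℕ :=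
  Finsupp.equivFunOnFinite.symm s

theorem toF_apply {q : ℕ} (s : Fin q → ℕ) (i : Fin q) : toF s i = s i := rfl

theorem toF_inj {q : ℕ} : Function.Injective (toF (q := q)) :=
  Finsupp.equivFunOnFinite.symm.injective

theorem prod_X_pow {q : ℕ} (k : Fin q → ℕ) :
    (∏ i, (X i : MvPolynomial (Fin q) ℂ) ^ k i) = monomial (toF k) 1 := by
  rw [monomial_eq, C_1, one_mul, Finsupp.prod_fintype]
  · rfl
  · intro i; exact pow_zero _

theorem monomial_prod {q : ℕ} {ι : Type*} (s : Finset ι) (m : ι → (Fin q →₀ ℕ)) :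
    (∏ j ∈ s, monomial (m j) (1 : ℂ)) = monomial (∑ j ∈ s, m j) 1 := by
  classical
  induction s using Finset.cons_induction with
  | empty => simp
  | cons a s ha ih => rw [Finset.prod_cons, ih, monomial_mul, one_mul, Finset.sum_cons]

theorem GF {q : ℕ} (n : ℕ) (G : Matrix (Fin q) (Fin q) ℂ) (p : Fin q → ℕ)
    (hp : ∑ j, p j = n) :
    (∏ j, (Lf G j) ^ (p j)) = ∑ s ∈ V n q, C (D n G p s) * monomial (toF s) 1 := by
  classical
  -- step 1: expand each power via the multinomial theorem
  have hexp : ∀ j : Fin q, (Lf G j) ^ (p j) =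
      ∑ k ∈ Finset.piAntidiag Finset.univ (p j),
        (C ((Nat.multinomial Finset.univ k : ℂ) * ∏ i, G i j ^ k i) * monomial (toF k) 1) := by
    intro j
    rw [Lf, Finset.sum_pow_eq_sum_piAntidiag]
    refine Finset.sum_congr rfl fun k hk => ?_
    simp_rw [mul_pow]
    rw [Finset.prod_mul_distrib]
    simp_rw [← C_pow]
    rw [← map_prod, prod_X_pow, ← mul_assoc, map_mul]
    norm_cast
  have step1 : (∏ j, (Lf G j) ^ (p j)) =
      ∑ x ∈ Fintype.piFinset (fun j => Finset.piAntidiag Finset.univ (p j)),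
        ∏ j, (C ((Nat.multinomial Finset.univ (x j) : ℂ) * ∏ i, G i j ^ x j i)
          * monomial (toF (x j)) 1) := by
    calc (∏ j, (Lf G j) ^ (p j))
        = ∏ j, ∑ k ∈ Finset.piAntidiag Finset.univ (p j),
            (C ((Nat.multinomial Finset.univ k : ℂ) * ∏ i, G i j ^ k i) * monomial (toF k) 1) :=
          Finset.prod_congr rfl fun j _ => hexp j
      _ = _ := Finset.prod_univ_sum _ _
  rw [step1]
  -- the matrix set
  set Mat : Finset (Fin q → Fin q → ℕ) :=
    (Fintype.piFinset fun _ : Fin q => Fintype.piFinset fun _ : Fin q =>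
      Finset.range (n + 1)).filter (fun r => ∀ j, ∑ i, r i j = p j) with hMat
  have hmemMat : ∀ r, r ∈ Mat ↔ (∀ i j, r i j ≤ n) ∧ (∀ j, ∑ i, r i j = p j) := by
    intro r
    simp [hMat, Fintype.mem_piFinset, Nat.lt_succ_iff]
  -- step 2: reindex by transposing
  have step2 : ∑ x ∈ Fintype.piFinset (fun j => Finset.piAntidiag Finset.univ (p j)),
        (∏ j, (C ((Nat.multinomial Finset.univ (x j) : ℂ) * ∏ i, G i j ^ x j i)
          * monomial (toF (x j)) 1)) =
      ∑ r ∈ Mat, C (((∏ j, Nat.multinomial Finset.univ fun i => r i j : ℕ) : ℂ)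
          * ∏ i, ∏ j, G i j ^ r i j) * monomial (toF fun i => ∑ j, r i j) 1 := by
    refine Finset.sum_nbij' (fun x i j => x j i) (fun r j i => r i j) ?_ ?_ (fun _ _ => rfl)
      (fun _ _ => rfl) ?_
    · intro x hx
      rw [Fintype.mem_piFinset] at hx
      have hsum : ∀ j, ∑ i, x j i = p j := fun j => (Finset.mem_piAntidiag.mp (hx j)).1
      rw [hmemMat]
      refine ⟨fun i j => ?_, fun j => hsum j⟩
      calc x j i ≤ ∑ i', x j i' :=
            Finset.single_le_sum (f := fun i' => x j i') (fun _ _ => Nat.zero_le _)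
              (Finset.mem_univ i)
      _ = p j := hsum j
      _ ≤ ∑ j', p j' :=
            Finset.single_le_sum (f := fun j' => p j') (fun _ _ => Nat.zero_le _)
              (Finset.mem_univ j)
      _ = n := hp
    · intro r hr
      rw [hmemMat] at hr
      rw [Fintype.mem_piFinset]
      intro j
      rw [Finset.mem_piAntidiag]
      exact ⟨hr.2 j, fun i _ => Finset.mem_univ i⟩
    · intro x hx
      rw [Finset.prod_mul_distrib, ← map_prod, monomial_prod]
      have h1 : (∏ j, ((Nat.multinomial Finset.univ (x j) : ℂ) * ∏ i, G i j ^ x j i))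
          = ((∏ j, Nat.multinomial Finset.univ (fun i => x j i) : ℕ) : ℂ)
            * ∏ i, ∏ j, G i j ^ x j i := by
        rw [Finset.prod_mul_distrib]
        congr 1
        · push_cast; rfl
        · exact Finset.prod_comm
      have h2 : (∑ j, toF (x j)) = toF (fun i => ∑ j, x j i) := by
        ext i
        rw [Finsupp.finset_sum_apply, toF_apply]
        rfl
      rw [h1, h2]
  rw [step2]
  -- step 3: fiber the sum over row sums
  have hmaps : ∀ r ∈ Mat, (fun i => ∑ j, r i j) ∈ V n q := by
    intro r hr
    rw [hmemMat] at hr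
    have htot : ∑ i, ∑ j, r i j = n := by
      rw [Finset.sum_comm]
      rw [show ∑ j, ∑ i, r i j = ∑ j, p j from Finset.sum_congr rfl fun j _ => hr.2 j, hp]
    rw [mem_V]
    constructor
    · intro i
      calc ∑ j, r i j ≤ ∑ i', ∑ j, r i' j :=
            Finset.single_le_sum (f := fun i' => ∑ j, r i' j) (fun _ _ => Nat.zero_le _)
              (Finset.mem_univ i)
      _ = n := htot
    · exact htot
  rw [← Finset.sum_fiberwise_of_maps_to hmaps]
  refine Finset.sum_congr rfl fun s hs => ?_
  have hfil : Mat.filter (fun r => (fun i => ∑ j, r i j) = s) = Rset n q p s := by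
    ext r
    rw [Finset.mem_filter, hmemMat, mem_Rset]
    constructor
    · rintro ⟨⟨h1, h2⟩, h3⟩
      exact ⟨h1, fun i => congrFun h3 i, h2⟩
    · rintro ⟨h1, h2, h3⟩
      exact ⟨⟨h1, h3⟩, funext h2⟩
  rw [hfil, D, map_sum, Finset.sum_mul]
  refine Finset.sum_congr rfl fun r hr => ?_
  have hrow := (mem_Rset.mp hr).2.1
  rw [show (fun i => ∑ j, r i j) = s from funext hrow, map_mul]

theorem coeff_GF {q : ℕ} (n : ℕ) (G : Matrix (Fin q) (Fin q) ℂ) (p : Fin q → ℕ)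
    (hp : ∑ j, p j = n) {s : Fin q → ℕ} (hs : s ∈ V n q) :
    coeff (toF s) (∏ j, (Lf G j) ^ (p j)) = D n G p s := by
  classical
  rw [GF n G p hp, coeff_sum]
  rw [Finset.sum_eq_single s]
  · rw [coeff_C_mul, coeff_monomial, if_pos rfl, mul_one]
  · intro t ht hts
    rw [coeff_C_mul, coeff_monomial, if_neg (fun h => hts (toF_inj h)), mul_zero]
  · intro h; exact absurd hs h

theorem aeval_Lf {q : ℕ} (G : Matrix (Fin q) (Fin q) ℂ) (hsymm : ∀ i j, G i j = G j i)
    (hG : G * G.conjTranspose = (q : ℂ) • 1) (j : Fin q) :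
    aeval (Lf G) (Lf (fun i j => (starRingEnd ℂ) (G i j)) j) = C (q : ℂ) * X j := by
  classical
  rw [Lf.eq_1 (fun i j => (starRingEnd ℂ) (G i j)) j, map_sum]
  simp only [map_mul, aeval_C, aeval_X, algebraMap_eq]
  simp only [Lf, Finset.mul_sum]
  rw [Finset.sum_comm]
  have key : ∀ t : Fin q, (∑ i, C ((starRingEnd ℂ) (G i j)) * (C (G t i) * X t))
      = (if t = j then C (q : ℂ) * X t else 0) := by
    intro t
    have : (∑ i, C ((starRingEnd ℂ) (G i j)) * (C (G t i) * X t))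
        = C (∑ i, G t i * (starRingEnd ℂ) (G j i)) * X t := by
      rw [map_sum, Finset.sum_mul]
      refine Finset.sum_congr rfl fun i _ => ?_
      rw [hsymm i j, map_mul]
      ring
    rw [this]
    have h2 : (∑ i, G t i * (starRingEnd ℂ) (G j i)) = (G * G.conjTranspose) t j := by
      rw [Matrix.mul_apply]
      rfl
    rw [h2, hG, Matrix.smul_apply, Matrix.one_apply]
    split_ifs with h
    · subst h; simp
    · simp
  rw [Finset.sum_congr rfl fun t _ => key t, Finset.sum_ite_eq' Finset.univ j
    (fun t => C (q:ℂ) * X t), if_pos (Finset.mem_univ j)]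

theorem conj_MG {q : ℕ} (n : ℕ) (G : Matrix (Fin q) (Fin q) ℂ) (p s : Fin q → ℕ) :
    (starRingEnd ℂ) (MG n G p s) = MG n (fun i j => (starRingEnd ℂ) (G i j)) p s := by
  simp only [MG_eq, map_sum]
  refine Finset.sum_congr rfl fun r hr => ?_
  rw [map_mul, map_div₀, map_natCast, map_natCast, map_prod]
  congr 1
  refine Finset.prod_congr rfl fun i _ => ?_
  rw [map_prod]
  refine Finset.prod_congr rfl fun j _ => ?_
  rw [map_pow]

theorem D_orth {q : ℕ} (n : ℕ) (G : Matrix (Fin q) (Fin q) ℂ)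
    (hsymm : ∀ i j, G i j = G j i) (hG : G * G.conjTranspose = (q : ℂ) • 1)
    {s ℓ : Fin q → ℕ} (hs : s ∈ V n q) (hℓ : ℓ ∈ V n q) :
    ∑ i ∈ V n q, D n (fun a b => (starRingEnd ℂ) (G a b)) ℓ i * D n G i s
      = if s = ℓ then ((q : ℂ)) ^ n else 0 := by
  classical
  set Gb : Matrix (Fin q) (Fin q) ℂ := fun a b => (starRingEnd ℂ) (G a b) with hGb
  have hℓsum : ∑ j, ℓ j = n := (mem_V.mp hℓ).2
  have key : aeval (Lf G) (∏ j, (Lf Gb j) ^ (ℓ j)) = C ((q:ℂ)^n) * monomial (toF ℓ) 1 := by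
    rw [map_prod]
    simp_rw [map_pow]
    have : ∀ j : Fin q, aeval (Lf G) (Lf Gb j) = C (q : ℂ) * X j :=
      fun j => aeval_Lf G hsymm hG j
    rw [Finset.prod_congr rfl fun j _ => by rw [this j]]
    simp_rw [mul_pow]
    rw [Finset.prod_mul_distrib]
    simp_rw [← C_pow]
    rw [← map_prod, prod_X_pow, Finset.prod_pow_eq_pow_sum, hℓsum]
  -- other evaluation: expand via GF for Gb first
  have key2 : aeval (Lf G) (∏ j, (Lf Gb j) ^ (ℓ j))
      = ∑ i ∈ V n q, C (D n Gb ℓ i) * ∏ j, (Lf G j) ^ (i j) := by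
    rw [GF n Gb ℓ hℓsum, map_sum]
    refine Finset.sum_congr rfl fun i hi => ?_
    rw [map_mul, aeval_C, algebraMap_eq, aeval_monomial, map_one, one_mul]
    congr 1
    rw [Finsupp.prod_fintype]
    · rfl
    · intro j; exact pow_zero _
  have := congrArg (coeff (toF s)) (key2.symm.trans key)
  rw [coeff_sum, coeff_C_mul, coeff_monomial] at this
  simp_rw [coeff_C_mul] at this
  have hco : ∀ i ∈ V n q, D n Gb ℓ i * coeff (toF s) (∏ j, (Lf G j) ^ (i j))
      = D n Gb ℓ i * D n G i s := by
    intro i hi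
    rw [coeff_GF n G i (mem_V.mp hi).2 hs]
  rw [Finset.sum_congr rfl hco] at this
  rw [this]
  by_cases h : s = ℓ
  · subst h; rw [if_pos rfl, if_pos rfl, mul_one]
  · rw [if_neg h, if_neg (fun hh => h (toF_inj hh).symm), mul_zero]

theorem MG_orth {q : ℕ} (n : ℕ) (G : Matrix (Fin q) (Fin q) ℂ)
    (hsymm : ∀ i j, G i j = G j i) (hG : G * G.conjTranspose = (q : ℂ) • 1)
    {s ℓ : Fin q → ℕ} (hs : s ∈ V n q) (hℓ : ℓ ∈ V n q) :
    ∑ i ∈ V n q, MG n G i s * (starRingEnd ℂ) (MG n G ℓ i)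
      = if s = ℓ then ((q : ℂ)) ^ n else 0 := by
  classical
  set Gb : Matrix (Fin q) (Fin q) ℂ := fun a b => (starRingEnd ℂ) (G a b) with hGb
  have hFs := fact_ne_zero s
  have hFl := fact_ne_zero ℓ
  have termM : ∀ i, ((∏ a, Nat.factorial (ℓ a) : ℕ) : ℂ)
        * (MG n G i s * (starRingEnd ℂ) (MG n G ℓ i))
      = ((∏ a, Nat.factorial (s a) : ℕ) : ℂ) * (D n Gb ℓ i * D n G i s) := by
    intro i
    have hFi := fact_ne_zero i
    apply mul_right_cancel₀ hFi
    have h1 := MG_D_rel n G i s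
    have h2 := MG_D_rel n Gb ℓ i
    rw [conj_MG, ← hGb]
    calc ((∏ a, Nat.factorial (ℓ a) : ℕ) : ℂ) * (MG n G i s * MG n Gb ℓ i)
          * ((∏ a, Nat.factorial (i a) : ℕ) : ℂ)
        = (((∏ a, Nat.factorial (i a) : ℕ) : ℂ) * MG n G i s)
          * (((∏ a, Nat.factorial (ℓ a) : ℕ) : ℂ) * MG n Gb ℓ i) := by ring
      _ = (((∏ a, Nat.factorial (s a) : ℕ) : ℂ) * D n G i s)
          * (((∏ a, Nat.factorial (i a) : ℕ) : ℂ) * D n Gb ℓ i) := by rw [h1, h2]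
      _ = ((∏ a, Nat.factorial (s a) : ℕ) : ℂ) * (D n Gb ℓ i * D n G i s)
          * ((∏ a, Nat.factorial (i a) : ℕ) : ℂ) := by ring
  apply mul_left_cancel₀ hFl
  rw [Finset.mul_sum, Finset.sum_congr rfl fun i _ => termM i, ← Finset.mul_sum,
    D_orth n G hsymm hG hs hℓ]
  by_cases h : s = ℓ
  · subst h; rw [if_pos rfl]
  · rw [if_neg h, mul_zero, mul_zero]

theorem stmt7 (q n : ℕ) (hq : 2 ≤ q) (hn : 0 < n)
    (G : Matrix (Fin q) (Fin q) ℂ) (hsymm : ∀ i j, G i j = G j i)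
    (hG : G * G.conjTranspose = (q : ℂ) • 1)
    (γ α : (Fin q → ℕ) → ℂ)
    (hγ : ∀ x ∈ V n q, γ x = ∑ s ∈ V n q, α s * MG n G x s)
    (ℓ : Fin q → ℕ) (hℓ : ℓ ∈ V n q) :
    α ℓ = ((q : ℂ) ^ n)⁻¹ * ∑ i ∈ V n q, γ i * (starRingEnd ℂ) (MG n G ℓ i) := by
  classical
  have hqn : ((q : ℂ)) ^ n ≠ 0 := by
    apply pow_ne_zero
    exact_mod_cast (by omega : q ≠ 0)
  have key : ∑ i ∈ V n q, γ i * (starRingEnd ℂ) (MG n G ℓ i) = α ℓ * (q : ℂ) ^ n := by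
    calc ∑ i ∈ V n q, γ i * (starRingEnd ℂ) (MG n G ℓ i)
        = ∑ i ∈ V n q, ∑ s ∈ V n q, α s * (MG n G i s * (starRingEnd ℂ) (MG n G ℓ i)) := by
          refine Finset.sum_congr rfl fun i hi => ?_
          rw [hγ i hi, Finset.sum_mul]
          exact Finset.sum_congr rfl fun s _ => mul_assoc _ _ _
      _ = ∑ s ∈ V n q, α s * ∑ i ∈ V n q, MG n G i s * (starRingEnd ℂ) (MG n G ℓ i) := by
          rw [Finset.sum_comm]
          exact Finset.sum_congr rfl fun s _ => (Finset.mul_sum _ _ _).symm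
      _ = ∑ s ∈ V n q, α s * (if s = ℓ then ((q : ℂ)) ^ n else 0) :=
          Finset.sum_congr rfl fun s hs => by rw [MG_orth n G hsymm hG hs hℓ]
      _ = α ℓ * (q : ℂ) ^ n := by
          rw [Finset.sum_eq_single ℓ]
          · rw [if_pos rfl]
          · intro s _ hsl; rw [if_neg hsl, mul_zero]
          · intro h; exact absurd hℓ h
  rw [key, mul_comm (α ℓ), ← mul_assoc, inv_mul_cancel₀ hqn, one_mul]
end

section
/- Let G be a generalized Hadamard matrix with symmetric core, first row all 1's, and first column -1 below the top entry, and let γ : V(n,q) → ℂ satisfy γ(x) = Σ_{s ∈ V(n,q)} α_s · MG(x;s). Then for every ℓ ∈ V(n,q): α_ℓ = (-1)^{ℓ_0} · q^{-n} · Σ_{i ∈ V(n,q)} (-1)^{i_0} · γ(i) · conj(MG(ℓ;i)). -/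
set_option linter.unusedSectionVars false
set_option linter.unusedVariables false
set_option maxHeartbeats 1000000

open Finset

namespace Stmt9Aux

open scoped Classical

variable {q : ℕ} [NeZero q]

def comp {n : ℕ} (w : Fin n → Fin q) : Fin q → ℕ := fun i => ∑ t, if w t = i then 1 else 0

lemma comp_cons {n : ℕ} (j : Fin q) (u : Fin n → Fin q) (i : Fin q) :
    comp (Fin.cons j u) i = (if j = i then 1 else 0) + comp u i := by
  unfold comp
  rw [Fin.sum_univ_succ]
  simp [Fin.cons_succ]

lemma exists_word {n : ℕ} (s : Fin q → ℕ) (hs : ∑ i, s i = n) :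
    ∃ w : Fin n → Fin q, comp w = s := by
  induction n generalizing s with
  | zero =>
    refine ⟨fun t => t.elim0, funext fun i => ?_⟩
    have h0 : s i = 0 := by
      have := Finset.sum_eq_zero_iff.1 hs i (mem_univ i)
      exact this
    simp [comp, h0]
  | succ n ih =>
    have hex : ∃ i, s i ≠ 0 := by
      by_contra h
      push_neg at h
      simp only [h] at hs
      simp at hs
    obtain ⟨a, ha⟩ := hex
    set s' : Fin q → ℕ := fun k => s k - if a = k then 1 else 0 with hs'def
    have hsk : ∀ k, (if a = k then 1 else 0) + s' k = s k := by
      intro k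
      rcases eq_or_ne a k with h | h
      · subst h; simp [hs'def]; omega
      · simp [hs'def, h]
    have hsum : ∑ i, s' i = n := by
      have h1 : ∑ k, ((if a = k then 1 else 0) + s' k) = n + 1 := by
        rw [Finset.sum_congr rfl fun k _ => hsk k]; exact hs
      rw [Finset.sum_add_distrib] at h1
      simp at h1
      omega
    obtain ⟨w', hw'⟩ := ih s' hsum
    refine ⟨Fin.cons a w', funext fun i => ?_⟩
    rw [comp_cons, hw', hsk]


lemma sum_comp {n : ℕ} (w : Fin n → Fin q) : ∑ i, comp w i = n := by
  unfold comp
  rw [Finset.sum_comm]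
  simp

lemma comp_le {n : ℕ} (w : Fin n → Fin q) (i : Fin q) : comp w i ≤ n := by
  calc comp w i ≤ ∑ j, comp w j := Finset.single_le_sum (fun _ _ => Nat.zero_le _) (mem_univ i)
  _ = n := sum_comp w

lemma comp_mem_V {n : ℕ} (w : Fin n → Fin q) : comp w ∈ V n q := by
  unfold V
  rw [Finset.mem_filter]
  refine ⟨?_, sum_comp w⟩
  rw [Fintype.mem_piFinset]
  exact fun i => Finset.mem_range.2 (Nat.lt_succ_of_le (comp_le w i))

lemma mem_V_sum {n : ℕ} {p : Fin q → ℕ} (hp : p ∈ V n q) : ∑ i, p i = n :=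
  (Finset.mem_filter.1 hp).2

lemma double_prod_split {M : Type*} [CommMonoid M] (f : Fin q → Fin q → M) (a j : Fin q) :
    ∏ i, ∏ c, f i c = f a j * ∏ i, ∏ c, if i = a ∧ c = j then 1 else f i c := by
  have h1 : ∏ i, ∏ c, f i c =
      (f a j * ∏ c ∈ univ.erase j, f a c) * ∏ i ∈ univ.erase a, ∏ c, f i c := by
    rw [Finset.mul_prod_erase univ (fun c => f a c) (mem_univ j),
      Finset.mul_prod_erase univ (fun i => ∏ c, f i c) (mem_univ a)]
  have h2 : (∏ i, ∏ c, if i = a ∧ c = j then 1 else f i c) =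
      (∏ c ∈ univ.erase j, f a c) * ∏ i ∈ univ.erase a, ∏ c, f i c := by
    rw [← Finset.mul_prod_erase univ (fun i => ∏ c, if i = a ∧ c = j then 1 else f i c)
      (mem_univ a)]
    congr 1
    · rw [← Finset.mul_prod_erase univ (fun c => if a = a ∧ c = j then 1 else f a c)
        (mem_univ j)]
      rw [if_pos (show a = a ∧ j = j from ⟨rfl, rfl⟩), one_mul]
      refine Finset.prod_congr rfl fun c hc => ?_
      rw [if_neg (by simp [(Finset.mem_erase.1 hc).1])]
    · refine Finset.prod_congr rfl fun i hi => Finset.prod_congr rfl fun c _ => ?_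
      simp [(Finset.mem_erase.1 hi).1]
  rw [h1, h2, mul_assoc]

/-- decrement a matrix at a single entry -/
def dec (a j : Fin q) (r : Fin q → Fin q → ℕ) : Fin q → Fin q → ℕ :=
  fun b c => r b c - if b = a ∧ c = j then 1 else 0

lemma dec_ne {a j : Fin q} (r : Fin q → Fin q → ℕ) {b c : Fin q} (h : ¬(b = a ∧ c = j)) :
    dec a j r b c = r b c := by simp [dec, h]

lemma dec_self (a j : Fin q) (r : Fin q → Fin q → ℕ) : dec a j r a j = r a j - 1 := by
  simp [dec]

lemma dec_pos {a j : Fin q} (r : Fin q → Fin q → ℕ) {b c : Fin q} (h : b = a ∧ c = j) :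
    dec a j r b c = r b c - 1 := by simp [dec, h]

lemma ite_prod_eq {M : Type*} [CommMonoid M] (a j : Fin q) (r : Fin q → Fin q → ℕ)
    (f : Fin q → Fin q → ℕ → M) :
    (∏ i, ∏ c, if i = a ∧ c = j then 1 else f i c (r i c)) =
      ∏ i, ∏ c, if i = a ∧ c = j then 1 else f i c (dec a j r i c) := by
  refine Finset.prod_congr rfl fun i _ => Finset.prod_congr rfl fun c _ => ?_
  by_cases h : i = a ∧ c = j
  · simp [h]
  · rw [if_neg h, if_neg h, dec_ne r h]

lemma prodG_dec (G : Matrix (Fin q) (Fin q) ℂ) (a j : Fin q) (r : Fin q → Fin q → ℕ)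
    (h : r a j ≠ 0) :
    ∏ i, ∏ c, G i c ^ r i c = G a j * ∏ i, ∏ c, G i c ^ dec a j r i c := by
  rw [double_prod_split (fun i c => G i c ^ r i c) a j,
    double_prod_split (fun i c => G i c ^ dec a j r i c) a j,
    ite_prod_eq a j r (fun i c m => G i c ^ m), ← mul_assoc]
  congr 1
  rw [dec_self, ← pow_succ']
  congr 1
  omega

lemma prodFact_dec (a j : Fin q) (r : Fin q → Fin q → ℕ) (h : r a j ≠ 0) :
    (∏ i, ∏ c, Nat.factorial (r i c)) = r a j * ∏ i, ∏ c, Nat.factorial (dec a j r i c) := by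
  rw [double_prod_split (fun i c => Nat.factorial (r i c)) a j,
    double_prod_split (fun i c => Nat.factorial (dec a j r i c)) a j,
    ite_prod_eq a j r (fun i c m => Nat.factorial m), ← mul_assoc]
  congr 1
  rw [dec_self, Nat.mul_factorial_pred h]

lemma prodFact_s (a : Fin q) (s' : Fin q → ℕ) :
    (∏ i, Nat.factorial ((if a = i then 1 else 0) + s' i)) =
      (s' a + 1) * ∏ i, Nat.factorial (s' i) := by
  rw [← Finset.mul_prod_erase univ (fun i => Nat.factorial ((if a = i then 1 else 0) + s' i))
    (mem_univ a), ← Finset.mul_prod_erase univ (fun i => Nat.factorial (s' i)) (mem_univ a)]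
  rw [if_pos rfl]
  have h1 : (∏ i ∈ univ.erase a, Nat.factorial ((if a = i then 1 else 0) + s' i)) =
      ∏ i ∈ univ.erase a, Nat.factorial (s' i) := by
    refine Finset.prod_congr rfl fun i hi => ?_
    rw [if_neg (Ne.symm (Finset.mem_erase.1 hi).1), Nat.zero_add]
  rw [h1, show 1 + s' a = s' a + 1 from by omega, Nat.factorial_succ, mul_assoc]

lemma pascal_term (G : Matrix (Fin q) (Fin q) ℂ) (a : Fin q) (s' : Fin q → ℕ)
    (r : Fin q → Fin q → ℕ) (hra : ∑ j, r a j = s' a + 1) :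
    ((∏ i, Nat.factorial ((if a = i then 1 else 0) + s' i) : ℕ) : ℂ) /
        ((∏ i, ∏ j, Nat.factorial (r i j) : ℕ) : ℂ) * ∏ i, ∏ j, G i j ^ r i j =
      ∑ j, if r a j = 0 then 0 else
        G a j * (((∏ i, Nat.factorial (s' i) : ℕ) : ℂ) /
          ((∏ i, ∏ c, Nat.factorial (dec a j r i c) : ℕ) : ℂ) * ∏ i, ∏ c, G i c ^ dec a j r i c) := by
  have hDr : ((∏ i, ∏ c, Nat.factorial (r i c) : ℕ) : ℂ) ≠ 0 := by
    push_cast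
    exact Finset.prod_ne_zero_iff.2 fun i _ => Finset.prod_ne_zero_iff.2 fun c _ => by
      exact_mod_cast Nat.cast_ne_zero.2 (Nat.factorial_ne_zero _)
  have key : ∀ j, (if r a j = 0 then 0 else
      G a j * (((∏ i, Nat.factorial (s' i) : ℕ) : ℂ) /
        ((∏ i, ∏ c, Nat.factorial (dec a j r i c) : ℕ) : ℂ) * ∏ i, ∏ c, G i c ^ dec a j r i c)) =
      (r a j : ℂ) * (((∏ i, Nat.factorial (s' i) : ℕ) : ℂ) /
        ((∏ i, ∏ c, Nat.factorial (r i c) : ℕ) : ℂ)) * ∏ i, ∏ c, G i c ^ r i c := by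
    intro j
    by_cases h : r a j = 0
    · simp [h]
    · rw [if_neg h]
      have hDd : ((∏ i, ∏ c, Nat.factorial (dec a j r i c) : ℕ) : ℂ) ≠ 0 := by
        push_cast
        exact Finset.prod_ne_zero_iff.2 fun i _ => Finset.prod_ne_zero_iff.2 fun c _ => by
          exact_mod_cast Nat.cast_ne_zero.2 (Nat.factorial_ne_zero _)
      have hf2 : ((∏ i, ∏ c, Nat.factorial (r i c) : ℕ) : ℂ) =
          (r a j : ℂ) * ((∏ i, ∏ c, Nat.factorial (dec a j r i c) : ℕ) : ℂ) := by
        rw [prodFact_dec a j r h]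
        push_cast
        ring
      rw [prodG_dec G a j r h, hf2]
      have hraj : (r a j : ℂ) ≠ 0 := Nat.cast_ne_zero.2 h
      field_simp
  rw [Finset.sum_congr rfl fun j _ => key j]
  rw [← Finset.sum_mul, ← Finset.sum_mul]
  have hsum : ∑ j, (r a j : ℂ) = ((s' a + 1 : ℕ) : ℂ) := by
    rw [← hra]; push_cast; ring
  rw [hsum, prodFact_s a s']
  push_cast
  ring

lemma MG_rec {n : ℕ} (G : Matrix (Fin q) (Fin q) ℂ) (a : Fin q) (p s' : Fin q → ℕ)
    (hp : ∑ i, p i = n + 1) (hs' : ∑ i, s' i = n) :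
    MG (n + 1) G p (fun i => (if a = i then 1 else 0) + s' i) =
      ∑ j, if p j = 0 then 0 else
        G a j * MG n G (fun k => p k - if j = k then 1 else 0) s' := by
  have hs'le : ∀ b, s' b ≤ n := fun b => by
    calc s' b ≤ ∑ i, s' i := Finset.single_le_sum (fun _ _ => Nat.zero_le _) (mem_univ b)
    _ = n := hs'
  simp only [MG]
  have step1 : ∀ r ∈ (Fintype.piFinset fun _ : Fin q => Fintype.piFinset fun _ : Fin q =>
      Finset.range (n + 1 + 1)).filter
      (fun r => (∀ i, ∑ j, r i j = (if a = i then 1 else 0) + s' i) ∧ (∀ j, ∑ i, r i j = p j)),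
      ((∏ i, Nat.factorial ((if a = i then 1 else 0) + s' i) : ℕ) : ℂ) /
        ((∏ i, ∏ j, Nat.factorial (r i j) : ℕ) : ℂ) * ∏ i, ∏ j, G i j ^ r i j =
      ∑ j, if r a j = 0 then 0 else
        G a j * (((∏ i, Nat.factorial (s' i) : ℕ) : ℂ) /
          ((∏ i, ∏ c, Nat.factorial (dec a j r i c) : ℕ) : ℂ) * ∏ i, ∏ c, G i c ^ dec a j r i c) := by
    intro r hr
    have hmem := Finset.mem_filter.1 hr
    have hra : ∑ j, r a j = s' a + 1 := by
      have h := hmem.2.1 a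
      rw [if_pos rfl] at h
      omega
    exact pascal_term G a s' r hra
  rw [Finset.sum_congr rfl step1, Finset.sum_comm]
  refine Finset.sum_congr rfl fun j _ => ?_
  by_cases hpj : p j = 0
  · rw [if_pos hpj]
    refine Finset.sum_eq_zero fun r hr => ?_
    have hmem := Finset.mem_filter.1 hr
    have hcol := hmem.2.2 j
    have hle : r a j ≤ ∑ i, r i j :=
      Finset.single_le_sum (f := fun i => r i j) (fun _ _ => Nat.zero_le _) (mem_univ a)
    rw [if_pos (by omega)]
  · rw [if_neg hpj, Finset.mul_sum]
    rw [← Finset.sum_filter_of_ne (p := fun r => ¬ r a j = 0)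
      (fun r _ hne => by intro h0; exact hne (by rw [if_pos h0]))]
    rw [Finset.sum_congr rfl (fun r hr => if_neg (Finset.mem_filter.1 hr).2)]
    refine Finset.sum_nbij' (fun r => dec a j r)
      (fun r' => fun b c => r' b c + if b = a ∧ c = j then 1 else 0) ?_ ?_ ?_ ?_ ?_
    · -- forward membership
      intro r hr
      obtain ⟨hrS, hraj⟩ := Finset.mem_filter.1 hr
      obtain ⟨hpi, hrow, hcol⟩ : (∀ b c, r b c ≤ n + 1) ∧
          (∀ i, ∑ c, r i c = (if a = i then 1 else 0) + s' i) ∧ (∀ c, ∑ b, r b c = p c) := by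
        have h := Finset.mem_filter.1 hrS
        refine ⟨fun b c => ?_, h.2.1, h.2.2⟩
        have h2 := Fintype.mem_piFinset.1 (Fintype.mem_piFinset.1 h.1 b) c
        simpa [Nat.lt_succ_iff] using h2
      have hrowdec : ∀ b, ∑ c, dec a j r b c = s' b := by
        intro b
        by_cases hb : b = a
        · have hpoint : ∀ c, dec a j r b c + (if c = j then 1 else 0) = r b c := by
            intro c
            by_cases hc : c = j
            · rw [dec_pos r ⟨hb, hc⟩, if_pos hc]
              have : r a j ≠ 0 := hraj
              rw [hb, hc]
              omega
            · rw [dec_ne r (fun h => hc h.2), if_neg hc]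
              omega
          have hsum : ∑ c, (dec a j r b c + (if c = j then 1 else 0)) = ∑ c, r b c :=
            Finset.sum_congr rfl fun c _ => hpoint c
          rw [Finset.sum_add_distrib, Finset.sum_ite_eq' univ j (fun _ => 1), hrow b] at hsum
          rw [hb] at hsum ⊢
          rw [if_pos rfl] at hsum
          simp at hsum
          omega
        · have heq : ∀ c, dec a j r b c = r b c := fun c => dec_ne r (fun h => hb h.1)
          rw [Finset.sum_congr rfl fun c _ => heq c, hrow b, if_neg (fun h => hb h.symm)]
          omega
      have hcoldec : ∀ c, ∑ b, dec a j r b c = p c - if j = c then 1 else 0 := by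
        intro c
        by_cases hc : c = j
        · have hpoint : ∀ b, dec a j r b c + (if b = a then 1 else 0) = r b c := by
            intro b
            by_cases hb : b = a
            · rw [dec_pos r ⟨hb, hc⟩, if_pos hb]
              have : r a j ≠ 0 := hraj
              rw [hb, hc]
              omega
            · rw [dec_ne r (fun h => hb h.1), if_neg hb]
              omega
          have hsum : ∑ b, (dec a j r b c + (if b = a then 1 else 0)) = ∑ b, r b c :=
            Finset.sum_congr rfl fun b _ => hpoint b
          rw [Finset.sum_add_distrib, Finset.sum_ite_eq' univ a (fun _ => 1), hcol c] at hsum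
          rw [hc] at hsum ⊢
          rw [if_pos rfl]
          simp at hsum
          omega
        · have heq : ∀ b, dec a j r b c = r b c := fun b => dec_ne r (fun h => hc h.2)
          rw [Finset.sum_congr rfl fun b _ => heq b, hcol c, if_neg (fun h => hc h.symm)]
          omega
      refine Finset.mem_filter.2 ⟨?_, hrowdec, hcoldec⟩
      refine Fintype.mem_piFinset.2 fun b => Fintype.mem_piFinset.2 fun c => ?_
      rw [Finset.mem_range, Nat.lt_succ_iff]
      calc dec a j r b c ≤ ∑ c', dec a j r b c' :=
        Finset.single_le_sum (f := fun c' => dec a j r b c') (fun _ _ => Nat.zero_le _) (mem_univ c)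
      _ = s' b := hrowdec b
      _ ≤ n := hs'le b
    · -- backward membership
      intro r' hr'
      obtain ⟨hpi', hrow', hcol'⟩ : (∀ b c, r' b c ≤ n) ∧ (∀ i, ∑ c, r' i c = s' i) ∧
          (∀ c, ∑ b, r' b c = p c - if j = c then 1 else 0) := by
        have h := Finset.mem_filter.1 hr'
        refine ⟨fun b c => ?_, h.2.1, h.2.2⟩
        have h2 := Fintype.mem_piFinset.1 (Fintype.mem_piFinset.1 h.1 b) c
        simpa [Nat.lt_succ_iff] using h2
      have hpjpos : 1 ≤ p j := Nat.one_le_iff_ne_zero.2 hpj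
      refine Finset.mem_filter.2 ⟨Finset.mem_filter.2 ⟨?_, ?_, ?_⟩, ?_⟩
      · refine Fintype.mem_piFinset.2 fun b => Fintype.mem_piFinset.2 fun c => ?_
        rw [Finset.mem_range, Nat.lt_succ_iff]
        have := hpi' b c
        show r' b c + (if b = a ∧ c = j then 1 else 0) ≤ n + 1
        by_cases h : b = a ∧ c = j
        · rw [if_pos h]; omega
        · rw [if_neg h]; omega
      · intro b
        rw [Finset.sum_add_distrib, hrow' b]
        by_cases hb : b = a
        · have heq : ∀ c, (if b = a ∧ c = j then 1 else 0) = (if c = j then 1 else 0) := by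
            intro c
            by_cases hc : c = j
            · rw [if_pos ⟨hb, hc⟩, if_pos hc]
            · rw [if_neg (fun h => hc h.2), if_neg hc]
          rw [Finset.sum_congr rfl fun c _ => heq c, Finset.sum_ite_eq' univ j (fun _ => 1),
            if_pos (mem_univ j), if_pos hb.symm]
          omega
        · have heq : ∀ c, (if b = a ∧ c = j then 1 else 0) = 0 :=
            fun c => if_neg (fun h => hb h.1)
          rw [Finset.sum_congr rfl fun c _ => heq c, if_neg (fun h => hb h.symm)]
          simp
      · intro c
        rw [Finset.sum_add_distrib, hcol' c]
        by_cases hc : c = j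
        · have heq : ∀ b, (if b = a ∧ c = j then 1 else 0) = (if b = a then 1 else 0) := by
            intro b
            by_cases hb : b = a
            · rw [if_pos ⟨hb, hc⟩, if_pos hb]
            · rw [if_neg (fun h => hb h.1), if_neg hb]
          rw [Finset.sum_congr rfl fun b _ => heq b, Finset.sum_ite_eq' univ a (fun _ => 1),
            if_pos (mem_univ a), if_pos hc.symm]
          rw [hc]
          omega
        · have heq : ∀ b, (if b = a ∧ c = j then 1 else 0) = 0 :=
            fun b => if_neg (fun h => hc h.2)
          rw [Finset.sum_congr rfl fun b _ => heq b, if_neg (fun h => hc h.symm)]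
          simp
      · show ¬ (r' a j + if a = a ∧ j = j then 1 else 0) = 0
        rw [if_pos ⟨rfl, rfl⟩]
        omega
    · -- left inverse
      intro r hr
      obtain ⟨hrS, hraj⟩ := Finset.mem_filter.1 hr
      funext b c
      show dec a j r b c + (if b = a ∧ c = j then 1 else 0) = r b c
      by_cases h : b = a ∧ c = j
      · rw [dec_pos r h, if_pos h, h.1, h.2]
        have : r a j ≠ 0 := hraj
        omega
      · rw [dec_ne r h, if_neg h]
        omega
    · -- right inverse
      intro r' hr'
      funext b c
      show (r' b c + if b = a ∧ c = j then 1 else 0) - (if b = a ∧ c = j then 1 else 0) = r' b c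
      omega
    · intro r hr
      rfl

lemma MG_word (G : Matrix (Fin q) (Fin q) ℂ) (n : ℕ) :
    ∀ (w : Fin n → Fin q) (p : Fin q → ℕ), ∑ i, p i = n →
      MG n G p (comp w) =
        ∑ u ∈ (Finset.univ : Finset (Fin n → Fin q)).filter (fun u => comp u = p),
          ∏ t, G (w t) (u t) := by
  induction n with
  | zero =>
    intro w p hp
    have hp0 : ∀ i, p i = 0 := fun i => by
      have := Finset.sum_eq_zero_iff.1 hp i (mem_univ i); exact this
    have hcomp0 : ∀ (u : Fin 0 → Fin q) (i : Fin q), comp u i = 0 := fun u i => by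
      simp [comp]
    -- LHS
    simp only [MG]
    have hset : (Fintype.piFinset fun _ : Fin q => Fintype.piFinset fun _ : Fin q =>
        Finset.range (0 + 1)).filter
        (fun r => (∀ i, ∑ j, r i j = comp w i) ∧ (∀ j, ∑ i, r i j = p j)) =
        {fun _ _ => (0 : ℕ)} := by
      ext r
      simp only [Finset.mem_filter, Fintype.mem_piFinset, Finset.mem_range,
        Finset.mem_singleton]
      constructor
      · rintro ⟨h1, _, _⟩
        funext b c
        have := h1 b c
        omega
      · rintro rfl
        refine ⟨fun b c => by norm_num, fun i => ?_, fun j => ?_⟩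
        · simp [hcomp0 w i]
        · simp [hp0 j]
    rw [hset, Finset.sum_singleton]
    have hflt : (Finset.univ : Finset (Fin 0 → Fin q)).filter (fun u => comp u = p) =
        Finset.univ := Finset.filter_true_of_mem fun u _ =>
      funext fun i => by rw [hcomp0 u i, hp0 i]
    rw [hflt]
    simp [Fintype.card_fun, hcomp0 w]
  | succ n ih =>
    intro w p hp
    have hcompw : comp w = fun i => (if w 0 = i then 1 else 0) + comp (Fin.tail w) i := by
      funext i
      conv_lhs => rw [← Fin.cons_self_tail w]
      rw [comp_cons]
    rw [hcompw, MG_rec G (w 0) p (comp (Fin.tail w)) hp (sum_comp _)]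
    rw [← Finset.sum_fiberwise_of_maps_to
      (g := fun u : Fin (n+1) → Fin q => u 0) (t := univ) (fun u _ => mem_univ _)]
    refine Finset.sum_congr rfl fun j _ => ?_
    by_cases hpj : p j = 0
    · rw [if_pos hpj]
      have hempty : (((Finset.univ : Finset (Fin (n+1) → Fin q)).filter
          (fun u => comp u = p)).filter (fun u => u 0 = j)) = ∅ := by
        refine Finset.eq_empty_of_forall_notMem fun u hu => ?_
        obtain ⟨hu1, hu2⟩ := Finset.mem_filter.1 hu
        have hcp : comp u = p := (Finset.mem_filter.1 hu1).2
        have h1 : 1 ≤ comp u j := by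
          unfold comp
          calc (1 : ℕ) = if u 0 = j then 1 else 0 := by rw [if_pos hu2]
          _ ≤ ∑ t, if u t = j then 1 else 0 :=
            Finset.single_le_sum (f := fun t => if u t = j then 1 else 0)
              (fun _ _ => Nat.zero_le _) (mem_univ 0)
        have h2 : comp u j = p j := congrFun hcp j
        omega
      rw [hempty, Finset.sum_empty]
    · rw [if_neg hpj]
      have hpjpos : 1 ≤ p j := Nat.one_le_iff_ne_zero.2 hpj
      have hpn : ∑ i, (p i - if j = i then 1 else 0) = n := by
        have h1 : ∑ k, ((if j = k then 1 else 0) + (p k - if j = k then 1 else 0)) =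
            ∑ k, p k := by
          refine Finset.sum_congr rfl fun k _ => ?_
          rcases eq_or_ne j k with h | h
          · subst h
            simp
            omega
          · simp [h]
        rw [Finset.sum_add_distrib] at h1
        have h2 : ∑ k, (if j = k then (1:ℕ) else 0) = 1 := by simp
        rw [h2, hp] at h1
        omega
      rw [ih (Fin.tail w) _ hpn, Finset.mul_sum]
      symm
      refine Finset.sum_nbij' (fun u => Fin.tail u) (fun u' => Fin.cons j u')
        ?_ ?_ ?_ ?_ ?_
      · intro u hu
        obtain ⟨hu1, hu2⟩ := Finset.mem_filter.1 hu
        have hcp : comp u = p := (Finset.mem_filter.1 hu1).2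
        refine Finset.mem_filter.2 ⟨mem_univ _, funext fun i => ?_⟩
        have h1 : comp u i = (if u 0 = i then 1 else 0) + comp (Fin.tail u) i := by
          conv_lhs => rw [← Fin.cons_self_tail u]
          rw [comp_cons]
        rw [hcp] at h1
        rw [hu2] at h1
        rcases eq_or_ne j i with h | h
        · subst h
          simp at h1 ⊢
          omega
        · simp [h] at h1 ⊢
          omega
      · intro u' hu'
        have hcp : comp u' = fun i => p i - if j = i then 1 else 0 :=
          (Finset.mem_filter.1 hu').2
        refine Finset.mem_filter.2 ⟨Finset.mem_filter.2 ⟨mem_univ _, funext fun i => ?_⟩, ?_⟩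
        · rw [comp_cons, hcp]
          rcases eq_or_ne j i with h | h
          · subst h
            simp
            omega
          · simp [h]
        · simp
      · intro u hu
        have hu2 : u 0 = j := (Finset.mem_filter.1 hu).2
        rw [← hu2]
        exact Fin.cons_self_tail u
      · intro u' _
        simp
      · intro u hu
        have hu2 : u 0 = j := (Finset.mem_filter.1 hu).2
        rw [Fin.prod_univ_succ, hu2]
        rfl

section
variable (G : Matrix (Fin q) (Fin q) ℂ) (hG : G * G.conjTranspose = (q : ℂ) • 1)
    (hrow : ∀ j, G 0 j = 1) (hcol : ∀ i, i ≠ 0 → G i 0 = -1)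
    (hcore : ∀ i j, i ≠ 0 → j ≠ 0 → G i j = G j i)

include hG hrow hcol hcore in
lemma scalar_orth (a b : Fin q) :
    ∑ j, (if j = 0 then (-1 : ℂ) else 1) * G a j * (starRingEnd ℂ) (G j b) =
      (if b = 0 then (-1 : ℂ) else 1) * q * (if a = b then 1 else 0) := by
  have hentry : ∑ j, G a j * (starRingEnd ℂ) (G b j) = if a = b then (q : ℂ) else 0 := by
    have := congrArg (fun M => M a b) hG
    simp only [Matrix.mul_apply, Matrix.conjTranspose_apply, Matrix.smul_apply,
      Matrix.one_apply, smul_eq_mul] at this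
    have h2 : ∑ j, G a j * (starRingEnd ℂ) (G b j) = (q:ℂ) * if a = b then 1 else 0 := this
    rw [h2]
    by_cases h : a = b <;> simp [h]
  have hsign : ∀ j, (if j = 0 then (-1 : ℂ) else 1) * (starRingEnd ℂ) (G j b) =
      (if b = 0 then (-1 : ℂ) else 1) * (starRingEnd ℂ) (G b j) := by
    intro j
    by_cases hj : j = 0 <;> by_cases hb : b = 0
    · simp [hj, hb]
    · simp only [hj, hb, if_true, if_neg hb]
      rw [hrow b, hcol b hb]
      simp
    · simp only [hj, hb, if_neg hj, if_true]
      rw [hrow j, hcol j hj]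
      simp
    · simp only [if_neg hj, if_neg hb]
      rw [hcore j b hj hb]
  calc ∑ j, (if j = 0 then (-1 : ℂ) else 1) * G a j * (starRingEnd ℂ) (G j b)
      = ∑ j, (if b = 0 then (-1 : ℂ) else 1) * (G a j * (starRingEnd ℂ) (G b j)) := by
        refine Finset.sum_congr rfl fun j _ => ?_
        rw [mul_comm (if j = 0 then (-1:ℂ) else 1) (G a j), mul_assoc, hsign j]
        ring
    _ = (if b = 0 then (-1 : ℂ) else 1) * (if a = b then (q:ℂ) else 0) := by
        rw [← Finset.mul_sum, hentry]
    _ = (if b = 0 then (-1 : ℂ) else 1) * q * (if a = b then 1 else 0) := by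
        by_cases h : a = b <;> simp [h]
end

section Orth

variable (G : Matrix (Fin q) (Fin q) ℂ) (hG : G * G.conjTranspose = (q : ℂ) • 1)
    (hrow : ∀ j, G 0 j = 1) (hcol : ∀ i, i ≠ 0 → G i 0 = -1)
    (hcore : ∀ i j, i ≠ 0 → j ≠ 0 → G i j = G j i)

include hG hrow hcol hcore in
lemma orth {n : ℕ} (w : Fin n → Fin q) (ℓ : Fin q → ℕ) (hℓ : ℓ ∈ V n q) :
    ∑ i ∈ V n q, (-1 : ℂ) ^ (i 0) * MG n G i (comp w) * (starRingEnd ℂ) (MG n G ℓ i) =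
      (if comp w = ℓ then 1 else 0) * (-1 : ℂ) ^ (ℓ 0) * (q : ℂ) ^ n := by
  have hℓsum : ∑ i, ℓ i = n := mem_V_sum hℓ
  have hsign : ∀ (v : Fin n → Fin q),
      ((-1 : ℂ)) ^ (comp v 0) = ∏ t, (if v t = 0 then (-1 : ℂ) else 1) := by
    intro v
    rw [show comp v 0 = ∑ t, (if v t = 0 then 1 else 0) from rfl,
      ← Finset.prod_pow_eq_pow_sum]
    refine Finset.prod_congr rfl fun t _ => ?_
    by_cases h : v t = 0 <;> simp [h]
  calc ∑ i ∈ V n q, (-1 : ℂ) ^ (i 0) * MG n G i (comp w) * (starRingEnd ℂ) (MG n G ℓ i)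
      = ∑ i ∈ V n q, ∑ u ∈ (Finset.univ : Finset (Fin n → Fin q)).filter
          (fun u => comp u = i),
          (-1 : ℂ) ^ (comp u 0) * (∏ t, G (w t) (u t)) *
            (starRingEnd ℂ) (MG n G ℓ (comp u)) := by
        refine Finset.sum_congr rfl fun i hi => ?_
        rw [MG_word G n w i (mem_V_sum hi), Finset.mul_sum, Finset.sum_mul]
        refine Finset.sum_congr rfl fun u hu => ?_
        rw [(Finset.mem_filter.1 hu).2]
    _ = ∑ u ∈ (Finset.univ : Finset (Fin n → Fin q)),
          (-1 : ℂ) ^ (comp u 0) * (∏ t, G (w t) (u t)) *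
            (starRingEnd ℂ) (MG n G ℓ (comp u)) :=
        Finset.sum_fiberwise_of_maps_to (fun u _ => comp_mem_V u) _
    _ = ∑ u ∈ (Finset.univ : Finset (Fin n → Fin q)),
          ∑ v ∈ (Finset.univ : Finset (Fin n → Fin q)).filter (fun v => comp v = ℓ),
          ∏ t, ((if u t = 0 then (-1 : ℂ) else 1) * G (w t) (u t) *
            (starRingEnd ℂ) (G (u t) (v t))) := by
        refine Finset.sum_congr rfl fun u _ => ?_
        rw [MG_word G n u ℓ hℓsum, map_sum, Finset.mul_sum]
        refine Finset.sum_congr rfl fun v hv => ?_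
        rw [map_prod, hsign u, ← Finset.prod_mul_distrib, ← Finset.prod_mul_distrib]
    _ = ∑ v ∈ (Finset.univ : Finset (Fin n → Fin q)).filter (fun v => comp v = ℓ),
          ∏ t, ∑ j, ((if j = 0 then (-1 : ℂ) else 1) * G (w t) j *
            (starRingEnd ℂ) (G j (v t))) := by
        rw [Finset.sum_comm]
        refine Finset.sum_congr rfl fun v _ => ?_
        rw [show (Finset.univ : Finset (Fin n → Fin q)) =
          Fintype.piFinset (fun _ => univ) from (Fintype.piFinset_univ).symm]
        exact (Finset.prod_univ_sum (fun _ => (univ : Finset (Fin q)))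
          (fun t j => (if j = 0 then (-1 : ℂ) else 1) * G (w t) j *
            (starRingEnd ℂ) (G j (v t)))).symm
    _ = ∑ v ∈ (Finset.univ : Finset (Fin n → Fin q)).filter (fun v => comp v = ℓ),
          (-1 : ℂ) ^ (ℓ 0) * (q : ℂ) ^ n * (if w = v then 1 else 0) := by
        refine Finset.sum_congr rfl fun v hv => ?_
        have hcv : comp v = ℓ := (Finset.mem_filter.1 hv).2
        rw [Finset.prod_congr rfl (fun t _ => scalar_orth G hG hrow hcol hcore (w t) (v t)),
          Finset.prod_mul_distrib, Finset.prod_mul_distrib]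
        have h1 : ∏ t : Fin n, (if v t = 0 then (-1 : ℂ) else 1) = (-1 : ℂ) ^ (ℓ 0) := by
          rw [← hcv, hsign v]
        have h2 : ∏ t : Fin n, (if w t = v t then (1 : ℂ) else 0) =
            if w = v then 1 else 0 := by
          rw [Finset.prod_boole]
          simp [funext_iff]
        have h3 : ∏ _t : Fin n, (q : ℂ) = (q : ℂ) ^ n := by
          rw [Finset.prod_const, Finset.card_univ, Fintype.card_fin]
        rw [h1, h2, h3]
    _ = (if comp w = ℓ then 1 else 0) * (-1 : ℂ) ^ (ℓ 0) * (q : ℂ) ^ n := by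
        rw [← Finset.mul_sum, Finset.sum_ite_eq _ w (fun _ => (1 : ℂ))]
        simp only [Finset.mem_filter, Finset.mem_univ, true_and]
        ring


end Orth

end Stmt9Aux

open Stmt9Aux in
theorem stmt9 (q n : ℕ) [NeZero q] (hq : 2 ≤ q) (hn : 0 < n)
    (G : Matrix (Fin q) (Fin q) ℂ) (hG : G * G.conjTranspose = (q : ℂ) • 1)
    (hrow : ∀ j, G 0 j = 1) (hcol : ∀ i, i ≠ 0 → G i 0 = -1)
    (hcore : ∀ i j, i ≠ 0 → j ≠ 0 → G i j = G j i)
    (γ α : (Fin q → ℕ) → ℂ)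
    (hγ : ∀ x ∈ V n q, γ x = ∑ s ∈ V n q, α s * MG n G x s)
    (ℓ : Fin q → ℕ) (hℓ : ℓ ∈ V n q) :
    α ℓ = (-1 : ℂ) ^ (ℓ 0) * ((q : ℂ) ^ n)⁻¹ *
      ∑ i ∈ V n q, (-1 : ℂ) ^ (i 0) * γ i * (starRingEnd ℂ) (MG n G ℓ i) := by
  have key : ∀ s ∈ V n q,
      ∑ i ∈ V n q, (-1 : ℂ) ^ (i 0) * MG n G i s * (starRingEnd ℂ) (MG n G ℓ i) =
        (if s = ℓ then 1 else 0) * (-1 : ℂ) ^ (ℓ 0) * (q : ℂ) ^ n := by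
    intro s hs
    obtain ⟨w, hw⟩ := exists_word s (mem_V_sum hs)
    rw [← hw]
    exact orth G hG hrow hcol hcore w ℓ hℓ
  have main : ∑ i ∈ V n q, (-1 : ℂ) ^ (i 0) * γ i * (starRingEnd ℂ) (MG n G ℓ i) =
      α ℓ * ((-1 : ℂ) ^ (ℓ 0) * (q : ℂ) ^ n) := by
    calc ∑ i ∈ V n q, (-1 : ℂ) ^ (i 0) * γ i * (starRingEnd ℂ) (MG n G ℓ i)
        = ∑ i ∈ V n q, ∑ s ∈ V n q,
            α s * ((-1 : ℂ) ^ (i 0) * MG n G i s * (starRingEnd ℂ) (MG n G ℓ i)) := by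
          refine Finset.sum_congr rfl fun i hi => ?_
          rw [hγ i hi, Finset.mul_sum, Finset.sum_mul]
          exact Finset.sum_congr rfl fun s _ => by ring
      _ = ∑ s ∈ V n q, α s * ∑ i ∈ V n q,
            ((-1 : ℂ) ^ (i 0) * MG n G i s * (starRingEnd ℂ) (MG n G ℓ i)) := by
          rw [Finset.sum_comm]
          exact Finset.sum_congr rfl fun s _ => (Finset.mul_sum _ _ _).symm
      _ = ∑ s ∈ V n q, if s = ℓ then α s * ((-1 : ℂ) ^ (ℓ 0) * (q : ℂ) ^ n) else 0 := by
          refine Finset.sum_congr rfl fun s hs => ?_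
          rw [key s hs]
          by_cases h : s = ℓ <;> simp [h] <;> ring
      _ = α ℓ * ((-1 : ℂ) ^ (ℓ 0) * (q : ℂ) ^ n) := by
          rw [Finset.sum_ite_eq' (V n q) ℓ (fun s => α s * ((-1 : ℂ) ^ (ℓ 0) * (q : ℂ) ^ n)),
            if_pos hℓ]
  rw [main]
  have hq0 : (q : ℂ) ≠ 0 := Nat.cast_ne_zero.2 (NeZero.ne q)
  have hqn : ((q : ℂ)) ^ n ≠ 0 := pow_ne_zero _ hq0
  have hm1 : ((-1 : ℂ)) ^ (ℓ 0) * ((-1 : ℂ)) ^ (ℓ 0) = 1 := by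
    rw [← pow_add]
    exact Even.neg_one_pow ⟨ℓ 0, rfl⟩
  rw [show (-1 : ℂ) ^ (ℓ 0) * ((q : ℂ) ^ n)⁻¹ * (α ℓ * ((-1 : ℂ) ^ (ℓ 0) * (q : ℂ) ^ n)) =
    α ℓ * ((-1 : ℂ) ^ (ℓ 0) * (-1 : ℂ) ^ (ℓ 0)) * (((q : ℂ) ^ n)⁻¹ * (q : ℂ) ^ n) from by ring,
    hm1, inv_mul_cancel₀ hqn, mul_one, mul_one]
end

section
/- If G is a generalized Hadamard matrix, then for all p ∈ V(n,q): Σ_{s ∈ V(n,q)} (1/s!) · |MG(p;s)|² = qⁿ/p!. -/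
open Finset

namespace Stmt14Aux

open scoped Classical


noncomputable def cnt {α β : Type*} [Fintype α] (f : α → β) (j : β) : ℕ :=
  (Finset.univ.filter fun k => f k = j).card

lemma cnt_eq_sum {α β : Type*} [Fintype α] (f : α → β) (j : β) :
    cnt f j = ∑ k, if f k = j then 1 else 0 :=
  Finset.card_filter _ _

lemma cnt_succ {m q : ℕ} (f : Fin (m+1) → Fin q) (j : Fin q) :
    cnt f j = (if f 0 = j then 1 else 0) + cnt (Fin.tail f) j := by
  rw [cnt_eq_sum, cnt_eq_sum, Fin.sum_univ_succ]
  simp [Fin.tail]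
  congr

lemma count_tuples : ∀ (m : ℕ) {q : ℕ} (c : Fin q → ℕ), (∑ j, c j) = m →
    (∏ j, (c j).factorial) *
      ((Finset.univ : Finset (Fin m → Fin q)).filter fun f => ∀ j, cnt f j = c j).card
      = m.factorial := by
  intro m
  induction m with
  | zero =>
    intro q c hc
    have hc0 : ∀ j, c j = 0 := by
      intro j
      exact Finset.sum_eq_zero_iff.mp hc j (mem_univ j)
    have hfilter : ((Finset.univ : Finset (Fin 0 → Fin q)).filter fun f => ∀ j, cnt f j = c j)
        = Finset.univ := by
      refine Finset.filter_true_of_mem fun f _ => fun j => ?_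
      rw [hc0 j, cnt_eq_sum]
      simp
    rw [hfilter]
    simp [hc0, Finset.card_univ]
  | succ m ih =>
    intro q c hc
    have key : ∀ j : Fin q,
        (∏ j', (c j').factorial) * ((Finset.univ : Finset (Fin (m+1) → Fin q)).filter
            fun f => (∀ j', cnt f j' = c j') ∧ f 0 = j).card = c j * m.factorial := by
      intro j
      by_cases hcj : c j = 0
      · have hempty : ((Finset.univ : Finset (Fin (m+1) → Fin q)).filter
            fun f => (∀ j', cnt f j' = c j') ∧ f 0 = j) = ∅ := by
          rw [Finset.eq_empty_iff_forall_notMem]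
          intro f hf
          rw [Finset.mem_filter] at hf
          obtain ⟨-, hP, h0⟩ := hf
          have := hP j
          rw [cnt_succ, if_pos h0, hcj] at this
          omega
        rw [hempty]
        simp [hcj]
      · obtain ⟨t, ht⟩ : ∃ t, c j = t + 1 :=
          ⟨c j - 1, (Nat.succ_pred_eq_of_pos (Nat.pos_of_ne_zero hcj)).symm⟩
        set c' : Fin q → ℕ := Function.update c j t with hc'def
        have hcard : ((Finset.univ : Finset (Fin (m+1) → Fin q)).filter
              fun f => (∀ j', cnt f j' = c j') ∧ f 0 = j).card
            = ((Finset.univ : Finset (Fin m → Fin q)).filter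
              fun g => ∀ j', cnt g j' = c' j').card := by
          apply Finset.card_nbij' (fun f => Fin.tail f) (fun g => Fin.cons j g)
          · intro f hf
            rw [Finset.mem_coe, Finset.mem_filter] at hf ⊢
            beta_reduce
            obtain ⟨-, hP, h0⟩ := hf
            refine ⟨Finset.mem_univ _, fun j' => ?_⟩
            have := hP j'
            rw [cnt_succ, h0] at this
            rcases eq_or_ne j j' with rfl | hne
            · rw [if_pos rfl] at this
              rw [hc'def, Function.update_self]
              omega
            · rw [if_neg hne] at this
              rw [hc'def, Function.update_of_ne (Ne.symm hne)]
              omega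
          · intro g hg
            rw [Finset.mem_coe, Finset.mem_filter] at hg ⊢
            beta_reduce
            obtain ⟨-, hP⟩ := hg
            refine ⟨Finset.mem_univ _, fun j' => ?_, Fin.cons_zero _ _⟩
            rw [cnt_succ, Fin.cons_zero, Fin.tail_cons, hP j']
            rcases eq_or_ne j j' with rfl | hne
            · rw [if_pos rfl, hc'def, Function.update_self]
              omega
            · rw [if_neg hne, hc'def, Function.update_of_ne (Ne.symm hne)]
              omega
          · intro f hf
            rw [Finset.mem_coe, Finset.mem_filter] at hf
            obtain ⟨-, -, h0⟩ := hf
            rw [← h0]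
            exact Fin.cons_self_tail f
          · intro g _
            exact Fin.tail_cons _ _
        have hsum' : ∑ j', c' j' = m := by
          have h1 : c j + ∑ j' ∈ Finset.univ.erase j, c j' = m + 1 := by
            rw [Finset.add_sum_erase _ c (mem_univ j)]; exact hc
          have h2 : ∑ j', c' j' = c' j + ∑ j' ∈ Finset.univ.erase j, c' j' :=
            (Finset.add_sum_erase _ c' (mem_univ j)).symm
          have h3 : ∑ j' ∈ Finset.univ.erase j, c' j' = ∑ j' ∈ Finset.univ.erase j, c j' :=
            Finset.sum_congr rfl (fun j' hj' => by
              rw [hc'def, Function.update_of_ne (Finset.ne_of_mem_erase hj')])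
          have h4 : c' j = t := by rw [hc'def, Function.update_self]
          rw [h2, h3, h4]
          clear hcard
          omega
        have hIH := ih c' hsum'
        have hprod : (∏ j', (c j').factorial) = c j * ∏ j', (c' j').factorial := by
          have h1 : (∏ j', (c j').factorial)
              = (c j).factorial * ∏ j' ∈ Finset.univ.erase j, (c j').factorial :=
            (Finset.mul_prod_erase _ _ (mem_univ j)).symm
          have h2 : (∏ j', (c' j').factorial)
              = (c' j).factorial * ∏ j' ∈ Finset.univ.erase j, (c' j').factorial :=
            (Finset.mul_prod_erase _ _ (mem_univ j)).symm
          have h3 : ∀ j' ∈ Finset.univ.erase j, (c' j').factorial = (c j').factorial := by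
            intro j' hj'
            rw [hc'def, Function.update_of_ne (Finset.ne_of_mem_erase hj')]
          rw [Finset.prod_congr rfl h3] at h2
          have h4 : c' j = t := by rw [hc'def, Function.update_self]
          rw [h1, h2, h4, ht, Nat.factorial_succ]
          ring
        rw [hcard, hprod, mul_assoc, hIH]
    have hsplit : ((Finset.univ : Finset (Fin (m+1) → Fin q)).filter
          fun f => ∀ j, cnt f j = c j).card
        = ∑ j : Fin q, ((Finset.univ : Finset (Fin (m+1) → Fin q)).filter
            fun f => (∀ j', cnt f j' = c j') ∧ f 0 = j).card := by
      rw [Finset.card_eq_sum_card_fiberwise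
        (f := fun f => f 0) (t := Finset.univ) (fun f _ => Finset.mem_univ _)]
      refine Finset.sum_congr rfl fun j _ => ?_
      rw [Finset.filter_filter]
    rw [hsplit, Finset.mul_sum]
    rw [Finset.sum_congr rfl fun j _ => key j, ← Finset.sum_mul, hc, Nat.factorial_succ]



lemma cnt_comp_equiv {α γ β : Type*} [Fintype α] [Fintype γ] (e : γ ≃ α) (f : α → β) (j : β) :
    cnt (fun k => f (e k)) j = cnt f j := by
  unfold cnt
  exact Finset.card_equiv e (fun i => by simp)


lemma count_maps {α : Type*} [Fintype α] [DecidableEq α] {q : ℕ} (c : Fin q → ℕ)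
    (hc : ∑ j, c j = Fintype.card α) :
    (∏ j, (c j).factorial) *
      ((Finset.univ : Finset (α → Fin q)).filter fun f => ∀ j, cnt f j = c j).card
      = (Fintype.card α).factorial := by
  set e := Fintype.equivFin α with he
  have hcard : ((Finset.univ : Finset (α → Fin q)).filter fun f => ∀ j, cnt f j = c j).card
      = ((Finset.univ : Finset (Fin (Fintype.card α) → Fin q)).filter
          fun f => ∀ j, cnt f j = c j).card := by
    apply Finset.card_nbij' (fun f => fun k => f (e.symm k)) (fun g => fun a => g (e a))
    · intro f hf
      rw [Finset.mem_coe, Finset.mem_filter] at hf ⊢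
      exact ⟨mem_univ _, fun j => by rw [cnt_comp_equiv e.symm f j]; exact hf.2 j⟩
    · intro g hg
      rw [Finset.mem_coe, Finset.mem_filter] at hg ⊢
      exact ⟨mem_univ _, fun j => by rw [cnt_comp_equiv e g j]; exact hg.2 j⟩
    · intro f _; funext a; simp
    · intro g _; funext k; simp
  rw [hcard]
  exact count_tuples _ c hc

lemma count_subtype {α : Type*} [Fintype α] [DecidableEq α] {q : ℕ} (c : Fin q → ℕ)
    (hc : ∑ j, c j = Fintype.card α) :
    (∏ j, (c j).factorial) * Fintype.card {f : α → Fin q // ∀ j, cnt f j = c j}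
      = (Fintype.card α).factorial := by
  rw [Fintype.card_subtype]
  exact count_maps c hc

noncomputable def pcnt {n q : ℕ} (σ f : Fin n → Fin q) (i j : Fin q) : ℕ :=
  (Finset.univ.filter fun k => σ k = i ∧ f k = j).card

lemma filter_irrel {α : Type*} (p : α → Prop) (h1 h2 : DecidablePred p) (s : Finset α) :
    @Finset.filter α p h1 s = @Finset.filter α p h2 s := by
  congr!

lemma pcnt_eq_cnt_sub {n q : ℕ} (σ f : Fin n → Fin q) (i j : Fin q) :
    pcnt σ f i j = cnt (fun k : {k // σ k = i} => f k.1) j := by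
  unfold pcnt cnt
  symm
  refine Finset.card_bij' (fun k _ => k.1)
    (fun k hk => ⟨k, by simp only [Finset.mem_filter] at hk; exact hk.2.1⟩) ?_ ?_ ?_ ?_
  · intro a ha
    simp only [Finset.mem_filter, Finset.mem_univ, true_and] at ha ⊢
    exact ⟨a.2, ha⟩
  · intro a ha
    simp only [Finset.mem_filter, Finset.mem_univ, true_and] at ha ⊢
    exact ha.2
  · intro a _
    rfl
  · intro a _
    rfl

lemma pcnt_row {n q : ℕ} (σ f : Fin n → Fin q) (i : Fin q) :
    ∑ j, pcnt σ f i j = cnt σ i := by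
  unfold pcnt cnt
  rw [Finset.card_eq_sum_card_fiberwise (f := f) (t := Finset.univ)
    (fun x _ => Finset.mem_univ (f x))]
  refine Finset.sum_congr rfl fun j _ => congrArg Finset.card ?_
  rw [Finset.filter_filter]
  ext k
  simp

lemma pcnt_col {n q : ℕ} (σ f : Fin n → Fin q) (j : Fin q) :
    ∑ i, pcnt σ f i j = cnt f j := by
  unfold pcnt cnt
  rw [Finset.card_eq_sum_card_fiberwise (f := σ) (t := Finset.univ)
    (fun x _ => Finset.mem_univ (σ x))]
  refine Finset.sum_congr rfl fun i _ => congrArg Finset.card ?_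
  rw [Finset.filter_filter]
  ext k
  simp [and_comm]

def domEquiv {n q : ℕ} (σ : Fin n → Fin q) :
    (Fin n → Fin q) ≃ ∀ i : Fin q, ({k // σ k = i} → Fin q) where
  toFun f i k := f k.1
  invFun g k := g (σ k) ⟨k, rfl⟩
  left_inv f := rfl
  right_inv g := by
    funext i k
    obtain ⟨k, hk⟩ := k
    subst hk
    rfl

set_option maxHeartbeats 1000000 in
lemma card_pcnt_fiber {n q : ℕ} (σ : Fin n → Fin q) (r : Fin q → Fin q → ℕ)
    (hr : ∀ i, ∑ j, r i j = cnt σ i) :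
    (∏ i, ∏ j, (r i j).factorial) *
      ((Finset.univ : Finset (Fin n → Fin q)).filter
        fun f => ∀ i, ∀ j, pcnt σ f i j = r i j).card
      = ∏ i, (cnt σ i).factorial := by
  have hcs : ((Finset.univ : Finset (Fin n → Fin q)).filter
        fun f => ∀ i, ∀ j, pcnt σ f i j = r i j).card
      = Fintype.card {f : Fin n → Fin q // ∀ i j, pcnt σ f i j = r i j} := by
    rw [Fintype.card_subtype]
  rw [hcs]
  have E : {f : Fin n → Fin q // ∀ i j, pcnt σ f i j = r i j}
      ≃ ∀ i : Fin q, {h : {k // σ k = i} → Fin q // ∀ j, cnt h j = r i j} := by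
    refine (Equiv.subtypeEquiv (domEquiv σ) fun f => ?_).trans (Equiv.subtypePiEquivPi)
    exact forall_congr' fun i => forall_congr' fun j => by rw [pcnt_eq_cnt_sub]; exact Iff.rfl
  have h2 := Fintype.card_congr E
  rw [h2]
  rw [Fintype.card_pi]
  rw [← Finset.prod_mul_distrib]
  refine Finset.prod_congr rfl fun i _ => ?_
  have hcf : Fintype.card {k // σ k = i} = cnt σ i := by
    rw [Fintype.card_subtype]
    exact congrArg Finset.card (filter_irrel _ _ _ _)
  have h := count_subtype (α := {k // σ k = i}) (r i) (by rw [hcf]; exact hr i)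
  rw [hcf] at h
  convert h using 3


lemma sum_cnt {α β : Type*} [Fintype α] [Fintype β] (f : α → β) :
    ∑ j, cnt f j = Fintype.card α := by
  rw [← Finset.card_univ]
  exact (Finset.card_eq_sum_card_fiberwise (fun x _ => Finset.mem_univ (f x))).symm

lemma cnt_le {n : ℕ} {β : Type*} (f : Fin n → β) (j : β) : cnt f j ≤ n := by
  unfold cnt
  calc (Finset.univ.filter fun k => f k = j).card ≤ (Finset.univ : Finset (Fin n)).card :=
        Finset.card_filter_le _ _
    _ = n := by simp

lemma pcnt_le {n q : ℕ} (σ f : Fin n → Fin q) (i j : Fin q) : pcnt σ f i j ≤ n := by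
  unfold pcnt
  calc (Finset.univ.filter fun k => σ k = i ∧ f k = j).card
      ≤ (Finset.univ : Finset (Fin n)).card := Finset.card_filter_le _ _
    _ = n := by simp

lemma prod_G {n q : ℕ} (G : Matrix (Fin q) (Fin q) ℂ) (σ f : Fin n → Fin q) :
    ∏ k, G (σ k) (f k) = ∏ i, ∏ j, G i j ^ pcnt σ f i j := by
  rw [← Finset.prod_fiberwise_of_maps_to (g := fun k => (σ k, f k)) (t := Finset.univ)
      (fun k _ => Finset.mem_univ _) (fun k => G (σ k) (f k))]
  rw [Fintype.prod_prod_type (f := fun y : Fin q × Fin q =>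
      ∏ k ∈ Finset.univ.filter fun k => (σ k, f k) = y, G (σ k) (f k))]
  refine Finset.prod_congr rfl fun i _ => Finset.prod_congr rfl fun j _ => ?_
  have hfe : (Finset.univ.filter fun k => (σ k, f k) = (i, j))
      = (Finset.univ.filter fun k => σ k = i ∧ f k = j) := by
    ext k
    simp [Prod.ext_iff]
  rw [hfe]
  calc (∏ k ∈ Finset.univ.filter fun k => σ k = i ∧ f k = j, G (σ k) (f k))
      = ∏ _k ∈ Finset.univ.filter fun k => σ k = i ∧ f k = j, G i j := by
        refine Finset.prod_congr rfl fun k hk => ?_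
        rw [Finset.mem_filter] at hk
        rw [hk.2.1, hk.2.2]
    _ = G i j ^ pcnt σ f i j := by
        rw [Finset.prod_const]
        unfold pcnt
        exact congrArg _ (congrArg Finset.card (filter_irrel _ _ _ _))

lemma MG_eq_sum {n q : ℕ} (G : Matrix (Fin q) (Fin q) ℂ) (p : Fin q → ℕ) (σ : Fin n → Fin q) :
    MG n G p (fun i => cnt σ i)
      = ∑ f ∈ (Finset.univ : Finset (Fin n → Fin q)).filter (fun f => ∀ j, cnt f j = p j),
          ∏ k, G (σ k) (f k) := by
  have hmaps : ∀ f ∈ (Finset.univ : Finset (Fin n → Fin q)).filter (fun f => ∀ j, cnt f j = p j),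
      (fun i j => pcnt σ f i j) ∈ (Fintype.piFinset fun _ : Fin q => Fintype.piFinset
        fun _ : Fin q => Finset.range (n + 1)).filter
        (fun r => (∀ i, ∑ j, r i j = (fun i => cnt σ i) i) ∧ (∀ j, ∑ i, r i j = p j)) := by
    intro f hf
    rw [Finset.mem_filter] at hf
    simp only [Finset.mem_filter, Fintype.mem_piFinset, Finset.mem_range]
    refine ⟨fun i j => Nat.lt_succ_of_le (pcnt_le σ f i j), fun i => pcnt_row σ f i,
      fun j => ?_⟩
    rw [pcnt_col σ f j]
    exact hf.2 j
  rw [← Finset.sum_fiberwise_of_maps_to hmaps (fun f => ∏ k, G (σ k) (f k))]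
  unfold MG
  refine Finset.sum_congr (filter_irrel _ _ _ _) fun r hr => ?_
  simp only [Finset.mem_filter, Fintype.mem_piFinset, Finset.mem_range] at hr
  obtain ⟨-, hrow, hcol⟩ := hr
  have hffilter : ((Finset.univ : Finset (Fin n → Fin q)).filter
        (fun f => ∀ j, cnt f j = p j)).filter (fun f => (fun i j => pcnt σ f i j) = r)
      = (Finset.univ : Finset (Fin n → Fin q)).filter
        (fun f => ∀ i, ∀ j, pcnt σ f i j = r i j) := by
    ext f
    simp only [Finset.mem_filter, Finset.mem_univ, true_and, funext_iff]
    constructor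
    · rintro ⟨-, h⟩
      exact h
    · intro h
      refine ⟨fun j => ?_, h⟩
      rw [← pcnt_col σ f j, Finset.sum_congr rfl fun i _ => h i j]
      exact hcol j
  rw [hffilter]
  have hconst : ∀ f ∈ (Finset.univ : Finset (Fin n → Fin q)).filter
      (fun f => ∀ i, ∀ j, pcnt σ f i j = r i j),
      (∏ k, G (σ k) (f k)) = ∏ i, ∏ j, G i j ^ r i j := by
    intro f hf
    rw [Finset.mem_filter] at hf
    rw [prod_G]
    exact Finset.prod_congr rfl fun i _ => Finset.prod_congr rfl fun j _ => by
      rw [hf.2 i j]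
  rw [Finset.sum_congr rfl hconst, Finset.sum_const, nsmul_eq_mul]
  have hcf := card_pcnt_fiber σ r hrow
  have hne : ((∏ i, ∏ j, (r i j).factorial : ℕ) : ℂ) ≠ 0 :=
    Nat.cast_ne_zero.mpr (Finset.prod_pos fun i _ =>
      Finset.prod_pos fun j _ => Nat.factorial_pos _).ne'
  have hcoef : ((∏ i, ((fun i => cnt σ i) i).factorial : ℕ) : ℂ)
      / ((∏ i, ∏ j, (r i j).factorial : ℕ) : ℂ)
      = (((Finset.univ : Finset (Fin n → Fin q)).filter
          (fun f => ∀ i, ∀ j, pcnt σ f i j = r i j)).card : ℂ) := by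
    rw [div_eq_iff hne]
    have : (∏ i, (cnt σ i).factorial)
        = ((Finset.univ : Finset (Fin n → Fin q)).filter
            (fun f => ∀ i, ∀ j, pcnt σ f i j = r i j)).card * ∏ i, ∏ j, (r i j).factorial := by
      rw [mul_comm]
      exact hcf.symm
    exact_mod_cast this
  rw [hcoef]

set_option maxHeartbeats 1000000 in
theorem main_aux (q n : ℕ) (hq : 2 ≤ q) (hn : 0 < n)
    (G : Matrix (Fin q) (Fin q) ℂ) (hG : G * G.conjTranspose = (q : ℂ) • 1)
    (p : Fin q → ℕ) (hp : p ∈ V n q) :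
    ∑ s ∈ V n q, (1 / ((∏ i, Nat.factorial (s i) : ℕ) : ℝ)) * ‖MG n G p s‖ ^ 2 =
      (q : ℝ) ^ n / ((∏ i, Nat.factorial (p i) : ℕ) : ℝ) := by
  have hpsum : ∑ i, p i = n := by
    unfold V at hp
    rw [Finset.mem_filter] at hp
    exact hp.2
  have hq0 : (q : ℂ) ≠ 0 := Nat.cast_ne_zero.mpr (by omega)
  have hG' : G.conjTranspose * G = (q : ℂ) • 1 := by
    have h1 : G * ((q : ℂ)⁻¹ • G.conjTranspose) = 1 := by
      rw [Matrix.mul_smul, hG, smul_smul, inv_mul_cancel₀ hq0, one_smul]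
    have h2 := mul_eq_one_comm.mp h1
    calc G.conjTranspose * G = ((q : ℂ) • ((q : ℂ)⁻¹ • G.conjTranspose)) * G := by
          rw [smul_smul, mul_inv_cancel₀ hq0, one_smul]
      _ = (q : ℂ) • (((q : ℂ)⁻¹ • G.conjTranspose) * G) := by rw [Matrix.smul_mul]
      _ = (q : ℂ) • 1 := by rw [h2]
  have horth : ∀ a b : Fin q, (∑ i, G i a * (starRingEnd ℂ) (G i b))
      = if b = a then (q : ℂ) else 0 := by
    intro a b
    calc (∑ i, G i a * (starRingEnd ℂ) (G i b))
        = ∑ i, G.conjTranspose b i * G i a := by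
          refine Finset.sum_congr rfl fun i _ => ?_
          rw [Matrix.conjTranspose_apply, mul_comm]
          rfl
      _ = ((q : ℂ) • (1 : Matrix (Fin q) (Fin q) ℂ)) b a := by rw [← Matrix.mul_apply, hG']
      _ = if b = a then (q : ℂ) else 0 := by
          rw [Matrix.smul_apply, Matrix.one_apply, smul_eq_mul, mul_ite, mul_one, mul_zero]
  set Fp := (Finset.univ : Finset (Fin n → Fin q)).filter (fun f => ∀ j, cnt f j = p j)
    with hFpdef
  have hFp : (∏ i, (p i).factorial) * Fp.card = n.factorial := by
    have h := count_maps (α := Fin n) p (by simpa using hpsum)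
    rw [hFpdef]
    simpa using h
  have key : ∀ σ : Fin n → Fin q,
      MG n G p (fun i => cnt σ i) * (starRingEnd ℂ) (MG n G p (fun i => cnt σ i))
      = ∑ f ∈ Fp, ∑ g ∈ Fp, ∏ k, (G (σ k) (f k) * (starRingEnd ℂ) (G (σ k) (g k))) := by
    intro σ
    rw [MG_eq_sum G p σ, ← hFpdef, map_sum, Finset.sum_mul_sum]
    refine Finset.sum_congr rfl fun f _ => Finset.sum_congr rfl fun g _ => ?_
    rw [map_prod, ← Finset.prod_mul_distrib]
  have hswap : ∀ f g : Fin n → Fin q,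
      (∑ σ : Fin n → Fin q, ∏ k, (G (σ k) (f k) * (starRingEnd ℂ) (G (σ k) (g k))))
      = ∏ k, ∑ i, (G i (f k) * (starRingEnd ℂ) (G i (g k))) := by
    intro f g
    rw [Finset.prod_univ_sum]
    rw [Fintype.piFinset_univ]
  have hdiag : ∀ f g : Fin n → Fin q,
      (∏ k : Fin n, if g k = f k then (q : ℂ) else 0)
      = if g = f then (q : ℂ) ^ n else 0 := by
    intro f g
    by_cases h : g = f
    · subst h
      simp
    · rw [if_neg h]
      obtain ⟨k, hk⟩ := Function.ne_iff.mp h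
      exact Finset.prod_eq_zero (Finset.mem_univ k) (if_neg hk)
  have hT : (∑ σ : Fin n → Fin q,
      MG n G p (fun i => cnt σ i) * (starRingEnd ℂ) (MG n G p (fun i => cnt σ i)))
      = (q : ℂ) ^ n * Fp.card := by
    rw [Finset.sum_congr rfl fun σ _ => key σ]
    rw [Finset.sum_comm]
    rw [Finset.sum_congr rfl fun f (_ : f ∈ Fp) => Finset.sum_comm]
    calc (∑ f ∈ Fp, ∑ g ∈ Fp, ∑ σ : Fin n → Fin q,
            ∏ k, (G (σ k) (f k) * (starRingEnd ℂ) (G (σ k) (g k))))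
        = ∑ f ∈ Fp, ∑ g ∈ Fp, (if g = f then (q : ℂ) ^ n else 0) := by
          refine Finset.sum_congr rfl fun f _ => Finset.sum_congr rfl fun g _ => ?_
          rw [hswap f g, ← hdiag f g]
          exact Finset.prod_congr rfl fun k _ => horth (f k) (g k)
      _ = ∑ f ∈ Fp, (q : ℂ) ^ n := by
          refine Finset.sum_congr rfl fun f hf => ?_
          rw [Finset.sum_ite_eq' Fp f (fun _ => (q : ℂ) ^ n), if_pos hf]
      _ = (q : ℂ) ^ n * Fp.card := by
          rw [Finset.sum_const, nsmul_eq_mul, mul_comm]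
  have hmapsV : ∀ σ : Fin n → Fin q, (fun i => cnt σ i) ∈ V n q := by
    intro σ
    unfold V
    rw [Finset.mem_filter]
    constructor
    · rw [Fintype.mem_piFinset]
      intro i
      rw [Finset.mem_range]
      exact Nat.lt_succ_of_le (cnt_le σ i)
    · have h := sum_cnt σ
      simpa using h
  have hfib : (∑ σ : Fin n → Fin q,
      MG n G p (fun i => cnt σ i) * (starRingEnd ℂ) (MG n G p (fun i => cnt σ i)))
      = ∑ s ∈ V n q,
          (((Finset.univ : Finset (Fin n → Fin q)).filter
            (fun σ => (fun i => cnt σ i) = s)).card : ℂ)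
          * (MG n G p s * (starRingEnd ℂ) (MG n G p s)) := by
    rw [← Finset.sum_fiberwise_of_maps_to (g := fun σ => (fun i => cnt σ i))
      (fun σ _ => hmapsV σ)
      (fun σ => MG n G p (fun i => cnt σ i) * (starRingEnd ℂ) (MG n G p (fun i => cnt σ i)))]
    refine Finset.sum_congr rfl fun s _ => ?_
    calc (∑ σ ∈ (Finset.univ : Finset (Fin n → Fin q)).filter
            (fun σ => (fun i => cnt σ i) = s),
            MG n G p (fun i => cnt σ i) * (starRingEnd ℂ) (MG n G p (fun i => cnt σ i)))
        = ∑ _σ ∈ (Finset.univ : Finset (Fin n → Fin q)).filter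
            (fun σ => (fun i => cnt σ i) = s),
            MG n G p s * (starRingEnd ℂ) (MG n G p s) := by
          refine Finset.sum_congr rfl fun σ hσ => ?_
          rw [Finset.mem_filter] at hσ
          rw [hσ.2]
      _ = _ := by rw [Finset.sum_const, nsmul_eq_mul]
  have hFs : ∀ s ∈ V n q, ((∏ i, (s i).factorial : ℕ) : ℂ) *
      (((Finset.univ : Finset (Fin n → Fin q)).filter
        (fun σ => (fun i => cnt σ i) = s)).card : ℂ) = ((n.factorial : ℕ) : ℂ) := by
    intro s hs
    have hssum : ∑ i, s i = n := by
      unfold V at hs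
      rw [Finset.mem_filter] at hs
      exact hs.2
    have hset : ((Finset.univ : Finset (Fin n → Fin q)).filter
          (fun σ => (fun i => cnt σ i) = s))
        = ((Finset.univ : Finset (Fin n → Fin q)).filter (fun σ => ∀ j, cnt σ j = s j)) := by
      ext σ
      simp [funext_iff]
    rw [hset]
    have h := count_maps (α := Fin n) s (by simpa using hssum)
    exact_mod_cast (by simpa using h)
  have hn0 : ((n.factorial : ℕ) : ℂ) ≠ 0 := Nat.cast_ne_zero.mpr (Nat.factorial_pos n).ne'
  have hp0 : ((∏ i, (p i).factorial : ℕ) : ℂ) ≠ 0 :=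
    Nat.cast_ne_zero.mpr (Finset.prod_pos fun i _ => Nat.factorial_pos _).ne'
  have hCkey : (∑ s ∈ V n q, (1 / ((∏ i, (s i).factorial : ℕ) : ℂ)) *
      (MG n G p s * (starRingEnd ℂ) (MG n G p s)))
      = (q : ℂ) ^ n / ((∏ i, (p i).factorial : ℕ) : ℂ) := by
    have hstep : ∀ s ∈ V n q, (1 / ((∏ i, (s i).factorial : ℕ) : ℂ)) *
        (MG n G p s * (starRingEnd ℂ) (MG n G p s))
        = (((Finset.univ : Finset (Fin n → Fin q)).filter
            (fun σ => (fun i => cnt σ i) = s)).card : ℂ)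
          * (MG n G p s * (starRingEnd ℂ) (MG n G p s)) / ((n.factorial : ℕ) : ℂ) := by
      intro s hs
      have hs0 : ((∏ i, (s i).factorial : ℕ) : ℂ) ≠ 0 :=
        Nat.cast_ne_zero.mpr (Finset.prod_pos fun i _ => Nat.factorial_pos _).ne'
      have hcoef : (1 / ((∏ i, (s i).factorial : ℕ) : ℂ))
          = (((Finset.univ : Finset (Fin n → Fin q)).filter
              (fun σ => (fun i => cnt σ i) = s)).card : ℂ) / ((n.factorial : ℕ) : ℂ) := by
        rw [div_eq_div_iff hs0 hn0, one_mul, mul_comm]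
        exact (hFs s hs).symm
      rw [hcoef]
      ring
    calc (∑ s ∈ V n q, (1 / ((∏ i, (s i).factorial : ℕ) : ℂ)) *
            (MG n G p s * (starRingEnd ℂ) (MG n G p s)))
        = ∑ s ∈ V n q, (((Finset.univ : Finset (Fin n → Fin q)).filter
              (fun σ => (fun i => cnt σ i) = s)).card : ℂ)
            * (MG n G p s * (starRingEnd ℂ) (MG n G p s)) / ((n.factorial : ℕ) : ℂ) :=
          Finset.sum_congr rfl hstep
      _ = (∑ s ∈ V n q, (((Finset.univ : Finset (Fin n → Fin q)).filter
              (fun σ => (fun i => cnt σ i) = s)).card : ℂ)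
            * (MG n G p s * (starRingEnd ℂ) (MG n G p s))) / ((n.factorial : ℕ) : ℂ) := by
          rw [Finset.sum_div]
      _ = ((q : ℂ) ^ n * Fp.card) / ((n.factorial : ℕ) : ℂ) := by rw [← hfib, hT]
      _ = (q : ℂ) ^ n / ((∏ i, (p i).factorial : ℕ) : ℂ) := by
          rw [div_eq_div_iff hn0 hp0]
          have hFpC : ((∏ i, (p i).factorial : ℕ) : ℂ) * (Fp.card : ℂ) = ((n.factorial : ℕ) : ℂ) := by
            exact_mod_cast hFp
          linear_combination (q : ℂ) ^ n * hFpC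
  have cast1 : ((∑ s ∈ V n q, (1 / ((∏ i, Nat.factorial (s i) : ℕ) : ℝ)) *
        ‖MG n G p s‖ ^ 2 : ℝ) : ℂ)
      = ∑ s ∈ V n q, (1 / ((∏ i, (s i).factorial : ℕ) : ℂ)) *
        (MG n G p s * (starRingEnd ℂ) (MG n G p s)) := by
    push_cast
    refine Finset.sum_congr rfl fun s _ => ?_
    rw [Complex.mul_conj, ← Complex.sq_norm]
    push_cast
    ring
  have cast2 : (((q : ℝ) ^ n / ((∏ i, Nat.factorial (p i) : ℕ) : ℝ) : ℝ) : ℂ)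
      = (q : ℂ) ^ n / ((∏ i, (p i).factorial : ℕ) : ℂ) := by
    push_cast
    ring
  apply Complex.ofReal_injective
  rw [cast1, cast2]
  exact hCkey

end Stmt14Aux

theorem stmt14 (q n : ℕ) (hq : 2 ≤ q) (hn : 0 < n)
    (G : Matrix (Fin q) (Fin q) ℂ) (hG : G * G.conjTranspose = (q : ℂ) • 1)
    (p : Fin q → ℕ) (hp : p ∈ V n q) :
    ∑ s ∈ V n q, (1 / ((∏ i, Nat.factorial (s i) : ℕ) : ℝ)) * ‖MG n G p s‖ ^ 2 =
      (q : ℝ) ^ n / ((∏ i, Nat.factorial (p i) : ℕ) : ℝ) :=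
  Stmt14Aux.main_aux q n hq hn G hG p hp
end
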